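/- arXiv:2505.20083 — 7 statements merged into one kernel-verified Lean document; each statement's English description precedes it below -/
import Mathlib

section
/- Let J be a countable subset of (0,∞) and γ : J → (0,∞) be such that S(r) := Σ_{s∈J, s≤r} γ(s) is finite for every r ≥ 0. Then the range {S(r) : r ∈ [0,∞)} of the nondecreasing pure-jump function S has Lebesgue measure zero. -/
open MeasureTheory

/-- If `J` is a countable subset of `(0,∞)`, `γ : J → (0,∞)`, and the pure-jump function
`S(r) = ∑_{s ∈ J, s ≤ r} γ(s)` is finite for every `r ≥ 0`, then the range
`{S(r) : r ∈ [0,∞)}` has Lebesgue measure zero. -/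
theorem range_of_pure_jump_function_measure_zero
    (J : Set ℝ) (hJc : J.Countable) (hJpos : ∀ s ∈ J, 0 < s)
    (γ : ℝ → ℝ) (hγ : ∀ s ∈ J, 0 < γ s)
    (hfin : ∀ r : ℝ, 0 ≤ r → Summable (fun s : ↥(J ∩ Set.Iic r) => γ (s : ℝ)))
    (S : ℝ → ℝ)
    (hS : ∀ r : ℝ, S r = ∑' s : ↥(J ∩ Set.Iic r), γ (s : ℝ)) :
    volume (S '' Set.Ici (0 : ℝ)) = 0 := by
  set f : ℝ → ℝ → ℝ := fun r => (J ∩ Set.Iic r).indicator γ with hf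
  have hsum : ∀ r : ℝ, 0 ≤ r → Summable (f r) := fun r hr =>
    (summable_subtype_iff_indicator).mp (hfin r hr)
  have hS' : ∀ r : ℝ, S r = ∑' x, f r x := fun r => (hS r).trans (tsum_subtype _ _)
  have hind : ∀ r r' : ℝ, r ≤ r' → ∀ x, f r x ≤ f r' x := by
    intro r r' hrr' x
    show (J ∩ Set.Iic r).indicator γ x ≤ (J ∩ Set.Iic r').indicator γ x
    by_cases hx : x ∈ J ∩ Set.Iic r
    · have hx' : x ∈ J ∩ Set.Iic r' := ⟨hx.1, hx.2.trans hrr'⟩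
      rw [Set.indicator_of_mem hx, Set.indicator_of_mem hx']
    · rw [Set.indicator_of_notMem hx]
      by_cases hx' : x ∈ J ∩ Set.Iic r'
      · rw [Set.indicator_of_mem hx']; exact (hγ x hx'.1).le
      · rw [Set.indicator_of_notMem hx']
  have hmono : ∀ r r' : ℝ, 0 ≤ r → r ≤ r' → S r ≤ S r' := by
    intro r r' hr hrr'
    rw [hS' r, hS' r']
    exact Summable.tsum_le_tsum (hind r r' hrr') (hsum r hr) (hsum r' (hr.trans hrr'))
  have hS0 : ∀ r : ℝ, 0 ≤ r → 0 ≤ S r := by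
    intro r hr
    rw [hS' r]
    exact tsum_nonneg fun x => Set.indicator_apply_nonneg fun hx => (hγ x hx.1).le
  -- singleton indicator facts
  have hgsum : ∀ s₀ : ℝ, Summable (({s₀} : Set ℝ).indicator γ) := by
    intro s₀
    refine summable_of_ne_finset_zero (s := {s₀}) fun b hb => ?_
    exact Set.indicator_of_notMem (by simpa using hb) γ
  have hgtsum : ∀ s₀ : ℝ, ∑' x, ({s₀} : Set ℝ).indicator γ x = γ s₀ := by
    intro s₀
    rw [tsum_eq_single s₀ (fun b hb => Set.indicator_of_notMem (by simpa using hb) γ)]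
    simp
  -- the jump inequality : if r < s₀ then S r + γ s₀ ≤ S s₀
  have hstep : ∀ s₀ ∈ J, ∀ r : ℝ, 0 ≤ r → r < s₀ → S r + γ s₀ ≤ S s₀ := by
    intro s₀ hs₀ r hr hrs
    have hs₀0 : (0 : ℝ) ≤ s₀ := (hJpos s₀ hs₀).le
    rw [hS' r, hS' s₀, ← hgtsum s₀, ← Summable.tsum_add (hsum r hr) (hgsum s₀)]
    refine Summable.tsum_le_tsum (fun x => ?_) ((hsum r hr).add (hgsum s₀)) (hsum s₀ hs₀0)
    show (J ∩ Set.Iic r).indicator γ x + ({s₀} : Set ℝ).indicator γ x ≤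
      (J ∩ Set.Iic s₀).indicator γ x
    by_cases hx : x = s₀
    · subst hx
      have hm1 : x ∉ J ∩ Set.Iic r := fun h => absurd h.2 (not_le.mpr hrs)
      have hm2 : x ∈ J ∩ Set.Iic x := ⟨hs₀, Set.self_mem_Iic⟩
      rw [Set.indicator_of_notMem hm1 γ, Set.indicator_of_mem (Set.mem_singleton x) γ,
        Set.indicator_of_mem hm2 γ]
      simp
    · have hm : x ∉ ({s₀} : Set ℝ) := by simpa using hx
      rw [Set.indicator_of_notMem hm γ, add_zero]
      exact hind r s₀ hrs.le x
  -- γ s ≤ S s for s ∈ J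
  have hγS : ∀ s ∈ J, γ s ≤ S s := by
    intro s hs
    rw [hS' s, ← hgtsum s]
    refine Summable.tsum_le_tsum (fun x => ?_) (hgsum s) (hsum s (hJpos s hs).le)
    show ({s} : Set ℝ).indicator γ x ≤ (J ∩ Set.Iic s).indicator γ x
    by_cases hx : x = s
    · subst hx
      have hm : x ∈ J ∩ Set.Iic x := ⟨hs, Set.self_mem_Iic⟩
      rw [Set.indicator_of_mem (Set.mem_singleton x) γ, Set.indicator_of_mem hm γ]
    · rw [Set.indicator_of_notMem (by simpa using hx) γ]
      exact Set.indicator_apply_nonneg fun hx' => (hγ x hx'.1).le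
  -- Main step: the image of [0, R] is null
  have key : ∀ R : ℝ, 0 ≤ R → volume (S '' Set.Icc 0 R) = 0 := by
    intro R hR
    set A := S '' Set.Icc 0 R with hA
    set I : ℝ → Set ℝ := fun s => Set.Ioo (S s - γ s) (S s) with hI
    have main : ∀ F : Finset ↥(J ∩ Set.Iic R),
        volume A + ∑ s ∈ F, ENNReal.ofReal (γ (s : ℝ)) ≤ ENNReal.ofReal (S R) := by
      intro F
      have hdisjA : ∀ s : ↥(J ∩ Set.Iic R), Disjoint A (I (s : ℝ)) := by
        intro s
        rw [Set.disjoint_left]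
        rintro x ⟨r, ⟨hr0, hrR⟩, rfl⟩ hxI
        obtain ⟨h1, h2⟩ := hxI
        rcases lt_or_ge r (s : ℝ) with h | h
        · have := hstep (s : ℝ) s.2.1 r hr0 h
          linarith
        · have := hmono (s : ℝ) r (hJpos _ s.2.1).le h
          linarith
      have hpair : (↑F : Set ↥(J ∩ Set.Iic R)).PairwiseDisjoint
          (fun s : ↥(J ∩ Set.Iic R) => I (s : ℝ)) := by
        intro s _ t _ hst
        have hvals : (s : ℝ) ≠ (t : ℝ) := fun h => hst (Subtype.ext h)
        have haux : ∀ a b : ↥(J ∩ Set.Iic R), (a : ℝ) < (b : ℝ) →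
            Disjoint (I (a : ℝ)) (I (b : ℝ)) := by
          intro a b hab
          have := hstep (b : ℝ) b.2.1 (a : ℝ) (hJpos _ a.2.1).le hab
          rw [Set.disjoint_left]
          rintro x ⟨_, hx2⟩ ⟨hx3, _⟩
          linarith
        rcases hvals.lt_or_gt with h | h
        · exact haux s t h
        · exact (haux t s h).symm
      have hmeasU : MeasurableSet (⋃ s ∈ F, I (s : ℝ)) :=
        F.measurableSet_biUnion fun s _ => measurableSet_Ioo
      have hdisjU : Disjoint A (⋃ s ∈ F, I (s : ℝ)) := by
        rw [Set.disjoint_iUnion₂_right]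
        exact fun s _ => hdisjA s
      have hU : A ∪ ⋃ s ∈ F, I (s : ℝ) ⊆ Set.Icc 0 (S R) := by
        rintro x (⟨r, ⟨hr0, hrR⟩, rfl⟩ | hx)
        · exact ⟨hS0 r hr0, hmono r R hr0 hrR⟩
        · obtain ⟨s, hsF, hxI⟩ := Set.mem_iUnion₂.mp hx
          obtain ⟨hx1, hx2⟩ := hxI
          have h1 : (0 : ℝ) ≤ S (s : ℝ) - γ (s : ℝ) := by
            have := hγS (s : ℝ) s.2.1
            linarith
          have h2 : S (s : ℝ) ≤ S R := hmono (s : ℝ) R (hJpos _ s.2.1).le s.2.2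
          constructor <;> linarith
      calc volume A + ∑ s ∈ F, ENNReal.ofReal (γ (s : ℝ))
          = volume A + volume (⋃ s ∈ F, I (s : ℝ)) := by
            rw [measure_biUnion_finset hpair (fun s _ => measurableSet_Ioo)]
            congr 1
            refine Finset.sum_congr rfl fun s _ => ?_
            rw [hI]
            rw [Real.volume_Ioo]
            congr 1
            ring
        _ = volume (A ∪ ⋃ s ∈ F, I (s : ℝ)) := (measure_union hdisjU hmeasU).symm
        _ ≤ volume (Set.Icc 0 (S R)) := measure_mono hU
        _ = ENNReal.ofReal (S R) := by rw [Real.volume_Icc, sub_zero]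
    have h3 : ∑' s : ↥(J ∩ Set.Iic R), ENNReal.ofReal (γ (s : ℝ)) = ENNReal.ofReal (S R) := by
      rw [hS R]
      exact (ENNReal.ofReal_tsum_of_nonneg (fun s => (hγ _ s.2.1).le) (hfin R hR)).symm
    have h2 : volume A + ∑' s : ↥(J ∩ Set.Iic R), ENNReal.ofReal (γ (s : ℝ)) ≤
        ENNReal.ofReal (S R) := by
      rw [ENNReal.tsum_eq_iSup_sum, ENNReal.add_iSup]
      exact iSup_le main
    rw [h3] at h2
    have h4 : volume A ≤ 0 := by
      refine ENNReal.le_of_add_le_add_right (a := ENNReal.ofReal (S R))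
        ENNReal.ofReal_ne_top ?_
      rw [zero_add]; exact h2
    exact le_antisymm h4 (zero_le)
  have hcover : S '' Set.Ici 0 ⊆ ⋃ n : ℕ, S '' Set.Icc 0 (n : ℝ) := by
    rintro x ⟨r, hr, rfl⟩
    exact Set.mem_iUnion.mpr ⟨⌈r⌉₊, ⟨r, ⟨hr, Nat.le_ceil r⟩, rfl⟩⟩
  exact measure_mono_null hcover
    (measure_iUnion_null fun n => key (n : ℝ) (Nat.cast_nonneg n))
end

section
/- For every θ > 0, sup over positive integers m of (E[exp(1 − e^{−θτ/m^{1/α}})])^m is finite. -/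
open MeasureTheory ProbabilityTheory

private lemma exp_one_sub_exp_neg_le (x : ℝ) (hx : 0 ≤ x) :
    Real.exp (1 - Real.exp (-x)) ≤ 1 + (Real.exp 1 - 1) * min 1 x := by
  set u : ℝ := 1 - Real.exp (-x) with hu
  have hu1 : u ≤ 1 := by
    have := Real.exp_pos (-x); simp only [hu]; linarith
  have hu0 : 0 ≤ u := by
    have : Real.exp (-x) ≤ 1 := Real.exp_le_one_iff.2 (by linarith)
    simp only [hu]; linarith
  have hux : u ≤ x := by
    have := Real.add_one_le_exp (-x)
    simp only [hu]; linarith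
  have hconv := convexOn_exp.2 (Set.mem_univ (0 : ℝ)) (Set.mem_univ (1 : ℝ))
    (by linarith : (0:ℝ) ≤ 1 - u) hu0 (by ring)
  simp only [smul_eq_mul, mul_zero, mul_one, zero_add, Real.exp_zero] at hconv
  have hmin : u ≤ min 1 x := le_min hu1 hux
  have he : (0:ℝ) ≤ Real.exp 1 - 1 := by
    have := Real.one_le_exp (le_of_lt one_pos); linarith
  have := mul_le_mul_of_nonneg_left hmin he
  calc Real.exp u ≤ (1 - u) + u * Real.exp 1 := hconv
    _ = 1 + (Real.exp 1 - 1) * u := by ring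
    _ ≤ 1 + (Real.exp 1 - 1) * min 1 x := by linarith

private lemma integral_min_le
    {Ω : Type*} [MeasureSpace Ω] [IsProbabilityMeasure (ℙ : Measure Ω)]
    {α M : ℝ} (hα0 : 0 < α) (hα1 : α < 1) (hM : 0 < M)
    {τ : Ω → ℝ} (hτmeas : Measurable τ) (hτnn : ∀ ω, 0 ≤ τ ω)
    (htail : ∀ s : ℝ, 0 < s → ℙ {ω | s < τ ω} ≤ ENNReal.ofReal (M * s ^ (-α)))
    {c : ℝ} (hc : 0 < c) :
    ∫ ω, min 1 (c * τ ω) ∂ℙ ≤ M / (1 - α) * c ^ α := by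
  set X : Ω → ℝ := fun ω => min 1 (c * τ ω) with hX
  have hXm : Measurable X := measurable_const.min (hτmeas.const_mul c)
  have hX0 : ∀ ω, 0 ≤ X ω := fun ω => le_min one_pos.le (mul_nonneg hc.le (hτnn ω))
  have hcα : 0 < c ^ α := Real.rpow_pos_of_pos hc α
  rw [integral_eq_lintegral_of_nonneg_ae (Filter.Eventually.of_forall hX0)
    hXm.aestronglyMeasurable]
  have h1α : (0:ℝ) < 1 - α := by linarith
  apply ENNReal.toReal_le_of_le_ofReal (by positivity)
  rw [lintegral_eq_lintegral_meas_lt ℙ (Filter.Eventually.of_forall hX0) hXm.aemeasurable]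
  have hGmeas : Measurable fun t : ℝ =>
      (Set.Ioo (0:ℝ) 1).indicator (fun t => ENNReal.ofReal (M * c ^ α * t ^ (-α))) t := by
    apply Measurable.indicator _ measurableSet_Ioo
    fun_prop
  calc ∫⁻ t in Set.Ioi (0:ℝ), ℙ {ω | t < X ω}
      ≤ ∫⁻ t in Set.Ioi (0:ℝ),
          (Set.Ioo (0:ℝ) 1).indicator (fun t => ENNReal.ofReal (M * c ^ α * t ^ (-α))) t := by
        apply setLIntegral_mono hGmeas
        intro t ht
        rcases lt_or_ge t 1 with ht1 | ht1
        · rw [Set.indicator_of_mem (Set.mem_Ioo.2 ⟨ht, ht1⟩)]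
          have hsub : {ω | t < X ω} ⊆ {ω | t / c < τ ω} := by
            intro ω hω
            have h1 : t < c * τ ω := lt_of_lt_of_le hω (min_le_right _ _)
            exact (div_lt_iff₀' hc).2 h1
          have htc : 0 < t / c := div_pos ht hc
          refine le_trans (measure_mono hsub) (le_trans (htail _ htc) ?_)
          apply ENNReal.ofReal_le_ofReal
          have heq : (t / c) ^ (-α) = c ^ α * t ^ (-α) := by
            rw [Real.div_rpow (le_of_lt ht) hc.le, Real.rpow_neg hc.le,
              Real.rpow_neg (le_of_lt ht)]
            field_simp
          rw [heq]
          exact le_of_eq (by ring)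
        · have hempty : {ω | t < X ω} = ∅ := by
            ext ω; simp only [Set.mem_setOf_eq, Set.mem_empty_iff_false, iff_false, not_lt]
            exact le_trans (min_le_left _ _) ht1
          rw [hempty, measure_empty]
          exact zero_le
    _ = ∫⁻ t in Set.Ioo (0:ℝ) 1, ENNReal.ofReal (M * c ^ α * t ^ (-α)) := by
        rw [lintegral_indicator measurableSet_Ioo,
          Measure.restrict_restrict measurableSet_Ioo,
          Set.inter_eq_self_of_subset_left (fun x hx => hx.1)]
    _ ≤ ENNReal.ofReal (M / (1 - α) * c ^ α) := by
        have hint : IntegrableOn (fun t : ℝ => M * c ^ α * t ^ (-α)) (Set.Ioo 0 1) := by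
          have h1 : IntervalIntegrable (fun t : ℝ => t ^ (-α)) volume 0 1 :=
            intervalIntegral.intervalIntegrable_rpow' (by linarith)
          have h2 := (h1.const_mul (M * c ^ α))
          rw [intervalIntegrable_iff_integrableOn_Ioo_of_le zero_le_one] at h2
          exact h2
        rw [← ofReal_integral_eq_lintegral_ofReal hint]
        · apply ENNReal.ofReal_le_ofReal
          have hIoo : ∫ t in Set.Ioo (0:ℝ) 1, M * c ^ α * t ^ (-α)
              = M * c ^ α * ∫ t in (0:ℝ)..1, t ^ (-α) := by
            rw [intervalIntegral.integral_of_le zero_le_one,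
              ← MeasureTheory.integral_Ioc_eq_integral_Ioo, MeasureTheory.integral_const_mul]
          rw [hIoo, integral_rpow (Or.inl (by linarith))]
          rw [Real.one_rpow, Real.zero_rpow (by linarith : -α + 1 ≠ 0)]
          have hne : -α + 1 ≠ 0 := by linarith
          have hne' : (1:ℝ) - α ≠ 0 := by linarith
          apply le_of_eq
          field_simp
          ring
        · filter_upwards [ae_restrict_mem measurableSet_Ioo] with t ht
          have ht0 : (0:ℝ) < t := ht.1
          positivity

/-- For every `θ > 0`, `sup_m (E[exp(1 − e^{−θτ/m^{1/α}})])^m < ∞`, the supremum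
being over positive integers `m`. -/
theorem sup_exp_moment_finite
    {Ω : Type*} [MeasureSpace Ω] [IsProbabilityMeasure (ℙ : Measure Ω)]
    (α : ℝ) (hα : α ∈ Set.Ioo (0 : ℝ) 1)
    (τ : Ω → ℝ) (hτmeas : Measurable τ) (hτnn : ∀ ω, 0 ≤ τ ω)
    (Lf : ℝ → ℝ) (hLf : Filter.Tendsto Lf Filter.atTop (nhds 1))
    (htail : ∀ t : ℝ, 0 < t → ℙ {ω | t < τ ω} = ENNReal.ofReal (Lf t / t ^ α))
    (θ : ℝ) (hθ : 0 < θ) :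
    ∃ C : ℝ, ∀ m : ℕ, 0 < m →
      (∫ ω, Real.exp (1 - Real.exp (-(θ * τ ω / (m : ℝ) ^ (1 / α)))) ∂ℙ) ^ m ≤ C := by
  obtain ⟨hα0, hα1⟩ := hα
  -- A uniform tail bound `ℙ(τ > s) ≤ M s^{-α}`.
  have hev : ∀ᶠ t in Filter.atTop, Lf t ≤ 2 := by
    have h2 : Set.Iio (2:ℝ) ∈ nhds (1:ℝ) := Iio_mem_nhds (by norm_num)
    filter_upwards [hLf h2] with t ht
    exact le_of_lt ht
  obtain ⟨T₀, hT₀⟩ := Filter.eventually_atTop.1 hev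
  set T : ℝ := max T₀ 1 with hT
  have hT1 : (1:ℝ) ≤ T := le_max_right _ _
  have hTpos : (0:ℝ) < T := lt_of_lt_of_le one_pos hT1
  have hTα : (0:ℝ) < T ^ α := Real.rpow_pos_of_pos hTpos α
  set M : ℝ := 2 + T ^ α with hMdef
  have hM : 0 < M := by positivity
  have hMT : T ^ α ≤ M := by linarith
  have hM2 : (2:ℝ) ≤ M := by linarith
  have htb : ∀ s : ℝ, 0 < s → ℙ {ω | s < τ ω} ≤ ENNReal.ofReal (M * s ^ (-α)) := by
    intro s hs
    have hsα : (0:ℝ) < s ^ α := Real.rpow_pos_of_pos hs α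
    rcases le_or_gt T s with hTs | hsT
    · rw [htail s hs]
      apply ENNReal.ofReal_le_ofReal
      have hL2 : Lf s ≤ 2 := hT₀ s (le_trans (le_max_left _ _) hTs)
      rw [Real.rpow_neg hs.le]
      rw [div_eq_mul_inv]
      apply mul_le_mul_of_nonneg_right (le_trans hL2 hM2) (by positivity)
    · have hub : (1:ℝ) ≤ M * s ^ (-α) := by
        have hss : s ^ α ≤ T ^ α :=
          Real.rpow_le_rpow hs.le hsT.le hα0.le
        have hinv : (T ^ α)⁻¹ ≤ (s ^ α)⁻¹ := by
          apply inv_anti₀ hsα hss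
        calc (1:ℝ) = T ^ α * (T ^ α)⁻¹ := by field_simp
          _ ≤ M * (s ^ α)⁻¹ := by
              apply mul_le_mul hMT hinv (by positivity) hM.le
          _ = M * s ^ (-α) := by rw [Real.rpow_neg hs.le]
      calc ℙ {ω | s < τ ω} ≤ 1 := prob_le_one
        _ = ENNReal.ofReal 1 := by simp
        _ ≤ ENNReal.ofReal (M * s ^ (-α)) := ENNReal.ofReal_le_ofReal hub
  -- constants
  have he1 : (1:ℝ) ≤ Real.exp 1 := Real.one_le_exp one_pos.le
  have hθα : (0:ℝ) < θ ^ α := Real.rpow_pos_of_pos hθ α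
  have h1α : (0:ℝ) < 1 - α := by linarith
  set A : ℝ := (Real.exp 1 - 1) * (M / (1 - α)) * θ ^ α with hAdef
  have hA : 0 ≤ A := by
    apply mul_nonneg (mul_nonneg (by linarith) (by positivity)) hθα.le
  refine ⟨Real.exp A, fun m hm => ?_⟩
  have hmpos : (0:ℝ) < (m:ℝ) := by exact_mod_cast hm
  have hmα : (0:ℝ) < (m:ℝ) ^ (1/α) := Real.rpow_pos_of_pos hmpos _
  set c : ℝ := θ / (m:ℝ) ^ (1/α) with hcdef
  have hc : 0 < c := div_pos hθ hmα
  have hcrw : ∀ ω, θ * τ ω / (m:ℝ) ^ (1/α) = c * τ ω := by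
    intro ω; rw [hcdef]; ring
  have hcα : c ^ α = θ ^ α / (m:ℝ) := by
    rw [hcdef, Real.div_rpow hθ.le hmα.le, ← Real.rpow_mul (Nat.cast_nonneg m),
      one_div, inv_mul_cancel₀ hα0.ne', Real.rpow_one]
  -- integrability facts
  have hφmeas : Measurable fun ω => Real.exp (1 - Real.exp (-(θ * τ ω / (m:ℝ) ^ (1/α)))) := by
    fun_prop
  have hφint : Integrable (fun ω => Real.exp (1 - Real.exp (-(θ * τ ω / (m:ℝ) ^ (1/α))))) ℙ := by
    apply Integrable.mono' (integrable_const (Real.exp 1)) hφmeas.aestronglyMeasurable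
    filter_upwards with ω
    rw [Real.norm_eq_abs, abs_of_pos (Real.exp_pos _)]
    apply Real.exp_le_exp.2
    have := Real.exp_pos (-(θ * τ ω / (m:ℝ) ^ (1/α)))
    linarith
  have hminmeas : Measurable fun ω => min 1 (c * τ ω) :=
    measurable_const.min (hτmeas.const_mul c)
  have hminint : Integrable (fun ω => min 1 (c * τ ω)) ℙ := by
    apply Integrable.mono' (integrable_const (1:ℝ)) hminmeas.aestronglyMeasurable
    filter_upwards with ω
    rw [Real.norm_eq_abs, abs_of_nonneg (le_min one_pos.le (mul_nonneg hc.le (hτnn ω)))]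
    exact min_le_left _ _
  have hgint : Integrable (fun ω => 1 + (Real.exp 1 - 1) * min 1 (c * τ ω)) ℙ :=
    (integrable_const 1).add (hminint.const_mul _)
  -- main estimate
  have hEle : (∫ ω, Real.exp (1 - Real.exp (-(θ * τ ω / (m:ℝ) ^ (1/α)))) ∂ℙ) ≤ 1 + A / m := by
    calc (∫ ω, Real.exp (1 - Real.exp (-(θ * τ ω / (m:ℝ) ^ (1/α)))) ∂ℙ)
        ≤ ∫ ω, (1 + (Real.exp 1 - 1) * min 1 (c * τ ω)) ∂ℙ := by
          apply integral_mono hφint hgint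
          intro ω
          show Real.exp (1 - Real.exp (-(θ * τ ω / (m:ℝ) ^ (1/α))))
              ≤ 1 + (Real.exp 1 - 1) * min 1 (c * τ ω)
          rw [hcrw ω]
          exact exp_one_sub_exp_neg_le _ (mul_nonneg hc.le (hτnn ω))
      _ = 1 + (Real.exp 1 - 1) * ∫ ω, min 1 (c * τ ω) ∂ℙ := by
          rw [integral_add (integrable_const 1) (hminint.const_mul _), integral_const,
            MeasureTheory.integral_const_mul]
          simp
      _ ≤ 1 + (Real.exp 1 - 1) * (M / (1 - α) * c ^ α) := by
          have hle := integral_min_le hα0 hα1 hM hτmeas hτnn htb hc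
          have := mul_le_mul_of_nonneg_left hle (by linarith : (0:ℝ) ≤ Real.exp 1 - 1)
          linarith
      _ = 1 + A / m := by rw [hcα, hAdef]; ring
  have hEnn : 0 ≤ (∫ ω, Real.exp (1 - Real.exp (-(θ * τ ω / (m:ℝ) ^ (1/α)))) ∂ℙ) :=
    integral_nonneg fun ω => (Real.exp_pos _).le
  have h1A : (0:ℝ) ≤ 1 + A / m := by positivity
  calc (∫ ω, Real.exp (1 - Real.exp (-(θ * τ ω / (m:ℝ) ^ (1/α)))) ∂ℙ) ^ m
      ≤ (1 + A / m) ^ m := pow_le_pow_left₀ hEnn hEle m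
    _ ≤ (Real.exp (A / m)) ^ m := by
        apply pow_le_pow_left₀ h1A _ m
        have := Real.add_one_le_exp (A / m)
        linarith
    _ = Real.exp A := by
        rw [← Real.exp_nat_mul, mul_div_cancel₀ _ (ne_of_gt hmpos)]
end

section
/- For every θ > 0, lim_{m→∞} m · (E[exp(1 − e^{−θτ/m^{1/α}})] − 1) = θ^α ∫_0^∞ x^{−α} e^{1−e^{−x}} e^{−x} dx, where the limit is over positive integers m. -/
open MeasureTheory ProbabilityTheory Filter Set

lemma layercake_aux {Ω : Type*} [MeasureSpace Ω] [IsProbabilityMeasure (ℙ : Measure Ω)]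
    (X : Ω → ℝ) (hX : Measurable X) (hXnn : ∀ ω, 0 ≤ X ω) :
    (∫ ω, Real.exp (1 - Real.exp (-(X ω))) ∂ℙ) - 1
      = ∫ t in Set.Ioi (0:ℝ),
          (ℙ {ω | t < X ω}).toReal * (Real.exp (-t) * Real.exp (1 - Real.exp (-t))) := by
  set g : ℝ → ℝ := fun t => Real.exp (-t) * Real.exp (1 - Real.exp (-t)) with hg
  have gcont : Continuous g := by
    exact (Real.continuous_exp.comp continuous_neg).mul
      (Real.continuous_exp.comp (continuous_const.sub (Real.continuous_exp.comp continuous_neg)))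
  have gnn : ∀ t, 0 ≤ g t := fun t => mul_nonneg (Real.exp_nonneg _) (Real.exp_nonneg _)
  have hderiv : ∀ y : ℝ, HasDerivAt (fun y => Real.exp (1 - Real.exp (-y))) (g y) y := by
    intro y
    have h2 : HasDerivAt (fun y : ℝ => -y) (-1) y := (hasDerivAt_id y).neg
    have h3 : HasDerivAt (fun y : ℝ => Real.exp (-y)) (Real.exp (-y) * (-1)) y := h2.exp
    have h4 : HasDerivAt (fun y : ℝ => 1 - Real.exp (-y)) (-(Real.exp (-y) * (-1))) y :=
      h3.const_sub 1
    have h5 := h4.exp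
    convert h5 using 1
    rw [hg]; ring
  have hint : ∀ y : ℝ, ∫ t in (0:ℝ)..y, g t = Real.exp (1 - Real.exp (-y)) - 1 := by
    intro y
    rw [intervalIntegral.integral_eq_sub_of_hasDerivAt (fun t _ => hderiv t)
      (gcont.intervalIntegrable 0 y)]
    simp
  have hPhi_nn : ∀ ω, (1:ℝ) ≤ Real.exp (1 - Real.exp (-(X ω))) := by
    intro ω
    have h1 : Real.exp (-(X ω)) ≤ 1 := Real.exp_le_one_iff.2 (neg_nonpos.2 (hXnn ω))
    exact Real.one_le_exp (by linarith)
  have hmeas : Measurable fun ω => Real.exp (1 - Real.exp (-(X ω))) :=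
    Real.measurable_exp.comp (measurable_const.sub (Real.measurable_exp.comp hX.neg))
  have hInt : Integrable (fun ω => Real.exp (1 - Real.exp (-(X ω)))) ℙ := by
    apply Integrable.mono' (integrable_const (Real.exp 1)) hmeas.aestronglyMeasurable
    refine Filter.Eventually.of_forall fun ω => ?_
    rw [Real.norm_eq_abs, abs_of_nonneg (Real.exp_nonneg _)]
    exact Real.exp_le_exp.2 (by linarith [Real.exp_nonneg (-(X ω))])
  have step1 : (∫ ω, Real.exp (1 - Real.exp (-(X ω))) ∂ℙ) - 1
      = ∫ ω, (Real.exp (1 - Real.exp (-(X ω))) - 1) ∂ℙ := by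
    rw [integral_sub hInt (integrable_const 1), integral_const]
    simp
  rw [step1, integral_eq_lintegral_of_nonneg_ae (f := fun ω => Real.exp (1 - Real.exp (-(X ω))) - 1)
      (Filter.Eventually.of_forall fun ω => by simp only [Pi.zero_apply]; linarith [hPhi_nn ω])
      ((hmeas.sub measurable_const).aestronglyMeasurable)]
  have step2 : ∀ ω, ENNReal.ofReal (Real.exp (1 - Real.exp (-(X ω))) - 1)
      = ENNReal.ofReal (∫ t in (0:ℝ)..(X ω), g t) := fun ω => by rw [hint]
  simp_rw [step2]
  rw [lintegral_comp_eq_lintegral_meas_lt_mul ℙ (Filter.Eventually.of_forall hXnn)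
    hX.aemeasurable (fun t _ => gcont.intervalIntegrable 0 t)
    (Filter.Eventually.of_forall fun t => gnn t)]
  have hanti : Antitone fun t : ℝ => ℙ {ω | t < X ω} := fun u v huv =>
    measure_mono fun ω hω => lt_of_le_of_lt huv hω
  rw [← integral_toReal]
  · refine integral_congr_ae (Filter.Eventually.of_forall fun t => ?_)
    dsimp only
    rw [ENNReal.toReal_mul, ENNReal.toReal_ofReal (gnn t)]
  · exact (hanti.measurable.mul (ENNReal.measurable_ofReal.comp gcont.measurable)).aemeasurable
  · refine Filter.Eventually.of_forall fun t => ?_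
    exact ENNReal.mul_lt_top (measure_lt_top _ _) ENNReal.ofReal_lt_top

/-- For every `θ > 0`,
`lim_{m→∞} m · (E[exp(1 − e^{−θτ/m^{1/α}})] − 1) = θ^α ∫_0^∞ x^{−α} e^{1−e^{−x}} e^{−x} dx`,
the limit being over positive integers `m`. -/
theorem lim_m_mul_exp_moment_sub_one
    {Ω : Type*} [MeasureSpace Ω] [IsProbabilityMeasure (ℙ : Measure Ω)]
    (α : ℝ) (hα : α ∈ Set.Ioo (0 : ℝ) 1)
    (τ : Ω → ℝ) (hτmeas : Measurable τ) (hτnn : ∀ ω, 0 ≤ τ ω)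
    (Lf : ℝ → ℝ) (hLf : Filter.Tendsto Lf Filter.atTop (nhds 1))
    (htail : ∀ t : ℝ, 0 < t → ℙ {ω | t < τ ω} = ENNReal.ofReal (Lf t / t ^ α))
    (θ : ℝ) (hθ : 0 < θ) :
    Filter.Tendsto
      (fun m : ℕ =>
        (m : ℝ) * ((∫ ω, Real.exp (1 - Real.exp (-(θ * τ ω / (m : ℝ) ^ (1 / α)))) ∂ℙ) - 1))
      Filter.atTop
      (nhds (θ ^ α *
        ∫ x in Set.Ioi (0 : ℝ), x ^ (-α) * Real.exp (1 - Real.exp (-x)) * Real.exp (-x))) := by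
  obtain ⟨hα0, hα1⟩ := hα
  have hαne : α ≠ 0 := ne_of_gt hα0
  set g : ℝ → ℝ := fun t => Real.exp (-t) * Real.exp (1 - Real.exp (-t)) with hg
  have gcont : Continuous g :=
    (Real.continuous_exp.comp continuous_neg).mul
      (Real.continuous_exp.comp (continuous_const.sub (Real.continuous_exp.comp continuous_neg)))
  have gnn : ∀ t, 0 ≤ g t := fun t => mul_nonneg (Real.exp_nonneg _) (Real.exp_nonneg _)
  have gle : ∀ t, g t ≤ Real.exp (-t) * Real.exp 1 := fun t =>
    mul_le_mul_of_nonneg_left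
      (Real.exp_le_exp.2 (by linarith [Real.exp_nonneg (-t)])) (Real.exp_nonneg _)
  -- pick `T` controlling `Lf`
  obtain ⟨T₀, hT₀⟩ := (Metric.tendsto_atTop.1 hLf) 1 one_pos
  set T : ℝ := max T₀ 1 with hTdef
  have hT1 : (1:ℝ) ≤ T := le_max_right _ _
  have hTpos : (0:ℝ) < T := lt_of_lt_of_le one_pos hT1
  have hTle : ∀ s, T ≤ s → Lf s ≤ 2 := by
    intro s hs
    have := hT₀ s (le_trans (le_max_left _ _) hs)
    rw [Real.dist_eq] at this
    have := abs_lt.1 this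
    linarith [this.2]
  set K : ℝ := 2 * θ ^ α + (T * θ) ^ α with hK
  have hK0 : 0 ≤ K := by rw [hK]; positivity
  -- explicit form of `m * ℙ(tail)` for `m ≥ 1`
  have hform : ∀ m : ℕ, 1 ≤ m → ∀ t : ℝ, 0 < t →
      (m:ℝ) * (ℙ {ω | t < θ * τ ω / (m:ℝ) ^ (1/α)}).toReal
        = θ ^ α * t ^ (-α) * max (Lf (t * (m:ℝ) ^ (1/α) / θ)) 0 := by
    intro m hm t ht
    have hmR : (1:ℝ) ≤ (m:ℝ) := by exact_mod_cast hm
    have hm0 : (0:ℝ) < m := lt_of_lt_of_le one_pos hmR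
    have hc0 : (0:ℝ) < (m:ℝ) ^ (1/α) := Real.rpow_pos_of_pos hm0 _
    have hs0 : (0:ℝ) < t * (m:ℝ) ^ (1/α) / θ := by positivity
    have hset : {ω | t < θ * τ ω / (m:ℝ) ^ (1/α)} = {ω | t * (m:ℝ) ^ (1/α) / θ < τ ω} := by
      ext ω
      simp only [Set.mem_setOf_eq]
      rw [lt_div_iff₀ hc0, div_lt_iff₀ hθ, mul_comm θ (τ ω)]
    have hcα : ((m:ℝ) ^ (1/α)) ^ α = (m:ℝ) := by
      rw [← Real.rpow_mul hm0.le, one_div, inv_mul_cancel₀ hαne, Real.rpow_one]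
    have hsα : (t * (m:ℝ) ^ (1/α) / θ) ^ α = t ^ α * (m:ℝ) / θ ^ α := by
      rw [Real.div_rpow (by positivity) hθ.le, Real.mul_rpow ht.le hc0.le, hcα]
    have htα : (0:ℝ) < t ^ α := Real.rpow_pos_of_pos ht _
    have hθα : (0:ℝ) < θ ^ α := Real.rpow_pos_of_pos hθ _
    have key : (m:ℝ) * (Lf (t * (m:ℝ) ^ (1/α) / θ) / (t * (m:ℝ) ^ (1/α) / θ) ^ α)
        = θ ^ α * t ^ (-α) * Lf (t * (m:ℝ) ^ (1/α) / θ) := by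
      rw [hsα, Real.rpow_neg ht.le]
      field_simp
    rw [hset, htail _ hs0, ENNReal.toReal_ofReal',
      mul_max_of_nonneg _ _ (by positivity : (0:ℝ) ≤ (m:ℝ)),
      mul_max_of_nonneg _ _ (by positivity : (0:ℝ) ≤ θ ^ α * t ^ (-α)), key, mul_zero, mul_zero]
  -- uniform bound
  have hbound : ∀ m : ℕ, ∀ t : ℝ, 0 < t →
      (m:ℝ) * (ℙ {ω | t < θ * τ ω / (m:ℝ) ^ (1/α)}).toReal ≤ K * t ^ (-α) := by
    intro m t ht
    have htα : (0:ℝ) < t ^ (-α) := Real.rpow_pos_of_pos ht _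
    have hθα : (0:ℝ) < θ ^ α := Real.rpow_pos_of_pos hθ _
    have hTθα : (0:ℝ) ≤ (T * θ) ^ α := Real.rpow_nonneg (by positivity) _
    rcases Nat.eq_zero_or_pos m with hm | hm
    · subst hm
      simp only [Nat.cast_zero, zero_mul]
      positivity
    · have hm1 : 1 ≤ m := hm
      have hmR : (1:ℝ) ≤ (m:ℝ) := by exact_mod_cast hm1
      have hm0 : (0:ℝ) < m := lt_of_lt_of_le one_pos hmR
      have hc0 : (0:ℝ) < (m:ℝ) ^ (1/α) := Real.rpow_pos_of_pos hm0 _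
      by_cases hsT : T ≤ t * (m:ℝ) ^ (1/α) / θ
      · rw [hform m hm1 t ht]
        have hmax : max (Lf (t * (m:ℝ) ^ (1/α) / θ)) 0 ≤ 2 :=
          max_le (hTle _ hsT) (by norm_num)
        calc θ ^ α * t ^ (-α) * max (Lf (t * (m:ℝ) ^ (1/α) / θ)) 0
            ≤ θ ^ α * t ^ (-α) * 2 :=
              mul_le_mul_of_nonneg_left hmax (by positivity)
          _ ≤ K * t ^ (-α) := by
              rw [hK]; nlinarith [mul_nonneg hTθα htα.le]
      · have hp1 : (ℙ {ω | t < θ * τ ω / (m:ℝ) ^ (1/α)}).toReal ≤ 1 := by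
          refine le_trans (ENNReal.toReal_mono (measure_ne_top _ _)
            (measure_mono (Set.subset_univ _))) ?_
          simp
        have hcT : (m:ℝ) ^ (1/α) < T * θ / t := by
          rw [lt_div_iff₀ ht]
          have h1 : t * (m:ℝ) ^ (1/α) / θ < T := not_le.1 hsT
          rw [div_lt_iff₀ hθ] at h1
          nlinarith
        have hmle : (m:ℝ) ≤ (T * θ) ^ α * t ^ (-α) := by
          have h2 : ((m:ℝ) ^ (1/α)) ^ α ≤ (T * θ / t) ^ α :=
            Real.rpow_le_rpow hc0.le hcT.le hα0.le
          rw [← Real.rpow_mul hm0.le, one_div, inv_mul_cancel₀ hαne, Real.rpow_one,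
            Real.div_rpow (by positivity) ht.le] at h2
          rw [Real.rpow_neg ht.le, ← div_eq_mul_inv]
          exact h2
        calc (m:ℝ) * (ℙ {ω | t < θ * τ ω / (m:ℝ) ^ (1/α)}).toReal
            ≤ (m:ℝ) * 1 := mul_le_mul_of_nonneg_left hp1 (Nat.cast_nonneg m)
          _ = (m:ℝ) := mul_one _
          _ ≤ (T * θ) ^ α * t ^ (-α) := hmle
          _ ≤ K * t ^ (-α) := by
              rw [hK]; nlinarith [mul_pos hθα htα]
  -- pointwise limit
  have hlim : ∀ t : ℝ, 0 < t →
      Filter.Tendsto (fun m : ℕ => (m:ℝ) * (ℙ {ω | t < θ * τ ω / (m:ℝ) ^ (1/α)}).toReal)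
        Filter.atTop (nhds (θ ^ α * t ^ (-α))) := by
    intro t ht
    have h1 : Filter.Tendsto (fun m : ℕ => t * (m:ℝ) ^ (1/α) / θ) Filter.atTop Filter.atTop := by
      apply Filter.Tendsto.atTop_div_const hθ
      apply Filter.Tendsto.const_mul_atTop ht
      exact (tendsto_rpow_atTop (by positivity)).comp tendsto_natCast_atTop_atTop
    have h2 : Filter.Tendsto (fun m : ℕ => max (Lf (t * (m:ℝ) ^ (1/α) / θ)) 0)
        Filter.atTop (nhds 1) := by
      have h3 := (hLf.comp h1).max (tendsto_const_nhds (x := (0:ℝ)))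
      simpa using h3
    have h4 := h2.const_mul (θ ^ α * t ^ (-α))
    rw [mul_one] at h4
    refine h4.congr' ?_
    filter_upwards [Filter.eventually_ge_atTop 1] with m hm
    exact (hform m hm t ht).symm
  -- layer cake representation of each term
  have keyA : ∀ m : ℕ,
      (∫ ω, Real.exp (1 - Real.exp (-(θ * τ ω / (m:ℝ) ^ (1/α)))) ∂ℙ) - 1
        = ∫ t in Set.Ioi (0:ℝ),
            (ℙ {ω | t < θ * τ ω / (m:ℝ) ^ (1/α)}).toReal * g t := by
    intro m
    exact layercake_aux (fun ω => θ * τ ω / (m:ℝ) ^ (1/α))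
      ((hτmeas.const_mul θ).div_const _)
      (fun ω => div_nonneg (mul_nonneg hθ.le (hτnn ω)) (Real.rpow_nonneg (Nat.cast_nonneg m) _))
  -- dominated convergence
  have hmeasF : ∀ m : ℕ, AEStronglyMeasurable
      (fun t : ℝ => (m:ℝ) * (ℙ {ω | t < θ * τ ω / (m:ℝ) ^ (1/α)}).toReal * g t)
      (volume.restrict (Set.Ioi 0)) := by
    intro m
    have hanti : Antitone fun t : ℝ => ℙ {ω | t < θ * τ ω / (m:ℝ) ^ (1/α)} := fun u v huv =>
      measure_mono fun ω hω => lt_of_le_of_lt huv hω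
    exact (((ENNReal.measurable_toReal.comp hanti.measurable).const_mul _).mul
      gcont.measurable).aestronglyMeasurable
  have hbint : Integrable (fun t : ℝ => K * Real.exp 1 * (Real.exp (-t) * t ^ (-α)))
      (volume.restrict (Set.Ioi 0)) := by
    have h0 : (0:ℝ) < 1 - α := by linarith
    have h1 := (Real.GammaIntegral_convergent h0).const_mul (K * Real.exp 1)
    have e : (1:ℝ) - α - 1 = -α := by ring
    simp only [e] at h1
    exact h1
  have hB : ∀ m : ℕ, ∀ᵐ t ∂(volume.restrict (Set.Ioi (0:ℝ))),
      ‖(m:ℝ) * (ℙ {ω | t < θ * τ ω / (m:ℝ) ^ (1/α)}).toReal * g t‖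
        ≤ K * Real.exp 1 * (Real.exp (-t) * t ^ (-α)) := by
    intro m
    rw [ae_restrict_iff' measurableSet_Ioi]
    refine Filter.Eventually.of_forall fun t ht => ?_
    have ht' : (0:ℝ) < t := ht
    have h1 : 0 ≤ (m:ℝ) * (ℙ {ω | t < θ * τ ω / (m:ℝ) ^ (1/α)}).toReal :=
      mul_nonneg (Nat.cast_nonneg m) ENNReal.toReal_nonneg
    rw [Real.norm_eq_abs, abs_of_nonneg (mul_nonneg h1 (gnn t))]
    calc (m:ℝ) * (ℙ {ω | t < θ * τ ω / (m:ℝ) ^ (1/α)}).toReal * g t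
        ≤ K * t ^ (-α) * g t :=
          mul_le_mul_of_nonneg_right (hbound m t ht') (gnn t)
      _ ≤ K * t ^ (-α) * (Real.exp (-t) * Real.exp 1) :=
          mul_le_mul_of_nonneg_left (gle t)
            (mul_nonneg hK0 (Real.rpow_nonneg ht'.le _))
      _ = K * Real.exp 1 * (Real.exp (-t) * t ^ (-α)) := by ring
  have hL : ∀ᵐ t ∂(volume.restrict (Set.Ioi (0:ℝ))),
      Filter.Tendsto
        (fun m : ℕ => (m:ℝ) * (ℙ {ω | t < θ * τ ω / (m:ℝ) ^ (1/α)}).toReal * g t)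
        Filter.atTop (nhds (θ ^ α * t ^ (-α) * g t)) := by
    rw [ae_restrict_iff' measurableSet_Ioi]
    exact Filter.Eventually.of_forall fun t ht => (hlim t ht).mul_const (g t)
  have hDCT := tendsto_integral_of_dominated_convergence
    (μ := volume.restrict (Set.Ioi (0:ℝ)))
    (F := fun (m : ℕ) (t : ℝ) => (m:ℝ) * (ℙ {ω | t < θ * τ ω / (m:ℝ) ^ (1/α)}).toReal * g t)
    (f := fun t : ℝ => θ ^ α * t ^ (-α) * g t)
    (fun t : ℝ => K * Real.exp 1 * (Real.exp (-t) * t ^ (-α)))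
    hmeasF hbint hB hL
  have hpt : (∫ t in Set.Ioi (0:ℝ), θ ^ α * t ^ (-α) * g t)
      = θ ^ α * ∫ x in Set.Ioi (0:ℝ),
          x ^ (-α) * Real.exp (1 - Real.exp (-x)) * Real.exp (-x) := by
    rw [← MeasureTheory.integral_const_mul]
    refine integral_congr_ae (Filter.Eventually.of_forall fun t => ?_)
    simp only [hg]
    ring
  rw [hpt] at hDCT
  refine hDCT.congr' ?_
  filter_upwards [Filter.eventually_ge_atTop 1] with m hm
  rw [keyA m, ← MeasureTheory.integral_const_mul]
  refine integral_congr_ae (Filter.Eventually.of_forall fun t => ?_)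
  ring
end

section
/- For every θ > 0, lim_{m→∞} m · E[1 − e^{−θτ/m^{1/α}}] = Γ(1−α) θ^α, where the limit is over positive integers m and Γ is the Gamma function. -/
open MeasureTheory ProbabilityTheory

section Aux

open MeasureTheory Set Filter Real
open scoped ENNReal

lemma exp_int_aux {l x : ℝ} (hl : 0 < l) (hx : 0 ≤ x) :
    ∫ t in Set.Ioo 0 x, l * Real.exp (-(l * t)) = 1 - Real.exp (-(l * x)) := by
  rw [← MeasureTheory.integral_Ioc_eq_integral_Ioo, ← intervalIntegral.integral_of_le hx]
  have hderiv : ∀ t ∈ Set.uIcc 0 x,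
      HasDerivAt (fun t => -Real.exp (-(l * t))) (l * Real.exp (-(l * t))) t := by
    intro t _
    have h1 : HasDerivAt (fun t : ℝ => -(l * t)) (-l) t := by
      simpa using (show HasDerivAt (fun y => -(l * id y)) (-(l * 1)) t from ((hasDerivAt_id t).const_mul l).neg)
    have := (h1.exp).neg
    simpa [mul_comm] using (show HasDerivAt (fun x => -Real.exp (-(l * x))) _ t from this)
  have hint : IntervalIntegrable (fun t => l * Real.exp (-(l * t))) volume 0 x :=
    (by fun_prop : Continuous fun t : ℝ => l * Real.exp (-(l * t))).intervalIntegrable 0 x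
  rw [intervalIntegral.integral_eq_sub_of_hasDerivAt hderiv hint]
  simp [sub_eq_add_neg, add_comm]

lemma fubini_aux {Ω : Type*} [MeasureSpace Ω] [IsProbabilityMeasure (volume : Measure Ω)]
    (τ : Ω → ℝ) (hτmeas : Measurable τ) (hτnn : ∀ ω, 0 ≤ τ ω) {l : ℝ} (hl : 0 < l) :
    ∫ ω, (1 - Real.exp (-(l * τ ω))) ∂(volume : Measure Ω)
      = ∫ t in Set.Ioi (0:ℝ), l * Real.exp (-(l * t)) * ((volume : Measure Ω) {ω : Ω | t < τ ω}).toReal := by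
  set g : ℝ → ℝ≥0∞ := fun t => ENNReal.ofReal (l * Real.exp (-(l * t))) with hg
  have hgmeas : Measurable g :=
    ENNReal.measurable_ofReal.comp (by fun_prop)
  -- pointwise rewriting of the integrand via an integral
  have hpt : ∀ x : ℝ, 0 ≤ x →
      ENNReal.ofReal (1 - Real.exp (-(l * x))) = ∫⁻ t in Set.Ioo 0 x, g t := by
    intro x hx
    rw [← exp_int_aux hl hx]
    rw [MeasureTheory.ofReal_integral_eq_lintegral_ofReal]
    · exact ((by fun_prop : Continuous fun t : ℝ => l * Real.exp (-(l * t))).continuousOn.integrableOn_compact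
        isCompact_Icc).mono_set Set.Ioo_subset_Icc_self
    · exact Filter.Eventually.of_forall fun t => by positivity
  -- nonnegativity of the integrand
  have hnn : ∀ ω, 0 ≤ 1 - Real.exp (-(l * τ ω)) := by
    intro ω
    have : Real.exp (-(l * τ ω)) ≤ 1 := by
      rw [Real.exp_le_one_iff]
      have := mul_nonneg hl.le (hτnn ω)
      linarith
    linarith
  -- product-measurable kernel
  set F : Ω → ℝ → ℝ≥0∞ := fun ω t =>
    g t * Set.indicator {p : Ω × ℝ | p.2 < τ p.1} (1 : Ω × ℝ → ℝ≥0∞) (ω, t) with hF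
  have hsetmeas : MeasurableSet {p : Ω × ℝ | p.2 < τ p.1} :=
    measurableSet_lt measurable_snd (hτmeas.comp measurable_fst)
  have hFmeas : Measurable (Function.uncurry F) := by
    apply Measurable.mul
    · exact hgmeas.comp measurable_snd
    · exact (measurable_one.indicator hsetmeas)
  have hτsetmeas : ∀ t : ℝ, MeasurableSet {ω : Ω | t < τ ω} :=
    fun t => measurableSet_lt measurable_const hτmeas
  -- LHS as a lintegral
  rw [MeasureTheory.integral_eq_lintegral_of_nonneg_ae
    (Filter.Eventually.of_forall hnn)
    ((by fun_prop : Measurable fun ω => 1 - Real.exp (-(l * τ ω))).aestronglyMeasurable)]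
  -- RHS as a lintegral
  have hGmeas : Measurable fun t : ℝ => ((volume : Measure Ω) {ω : Ω | t < τ ω}).toReal := by
    apply Antitone.measurable
    intro s t hst
    exact ENNReal.toReal_mono (measure_ne_top _ _)
      (measure_mono fun ω h => lt_of_le_of_lt hst h)
  rw [MeasureTheory.integral_eq_lintegral_of_nonneg_ae
    (Filter.Eventually.of_forall fun t => by positivity)
    ((show Measurable fun t : ℝ => l * Real.exp (-(l * t)) * ((volume : Measure Ω) {ω : Ω | t < τ ω}).toReal from
      (by fun_prop : Measurable fun t : ℝ => l * Real.exp (-(l * t))).mul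
      hGmeas).aestronglyMeasurable)]
  congr 1
  calc ∫⁻ ω, ENNReal.ofReal (1 - Real.exp (-(l * τ ω))) ∂(volume : Measure Ω)
      = ∫⁻ ω, (∫⁻ t in Set.Ioo 0 (τ ω), g t) ∂(volume : Measure Ω) := by
        exact lintegral_congr fun ω => hpt (τ ω) (hτnn ω)
    _ = ∫⁻ ω, (∫⁻ t in Set.Ioi 0, F ω t) ∂(volume : Measure Ω) := by
        apply lintegral_congr
        intro ω
        have : ∀ t : ℝ, F ω t = Set.indicator (Set.Iio (τ ω)) g t := by
          intro t
          by_cases h : t < τ ω <;>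
            simp [hF, Set.indicator_apply, h]
        rw [show (∫⁻ t in Set.Ioi (0:ℝ), F ω t) = ∫⁻ t in Set.Ioi (0:ℝ),
          Set.indicator (Set.Iio (τ ω)) g t from lintegral_congr fun t => by rw [this]]
        rw [lintegral_indicator measurableSet_Iio,
          Measure.restrict_restrict measurableSet_Iio]
        rw [show Set.Iio (τ ω) ∩ Set.Ioi 0 = Set.Ioo 0 (τ ω) by
          rw [Set.inter_comm, Set.Ioi_inter_Iio]]
    _ = ∫⁻ t in Set.Ioi 0, ∫⁻ ω, F ω t ∂(volume : Measure Ω) := by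
        exact lintegral_lintegral_swap hFmeas.aemeasurable
    _ = ∫⁻ t in Set.Ioi 0, ENNReal.ofReal (l * Real.exp (-(l * t)) * ((volume : Measure Ω) {ω : Ω | t < τ ω}).toReal) := by
        apply lintegral_congr
        intro t
        have h1 : ∀ ω, F ω t = g t * Set.indicator {ω : Ω | t < τ ω} (1 : Ω → ℝ≥0∞) ω := by
          intro ω
          by_cases h : t < τ ω <;> simp [hF, Set.indicator_apply, h]
        calc ∫⁻ ω, F ω t ∂(volume : Measure Ω)
            = ∫⁻ ω, g t * Set.indicator {ω : Ω | t < τ ω} (1 : Ω → ℝ≥0∞) ω ∂(volume : Measure Ω) :=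
              lintegral_congr h1
          _ = g t * (volume : Measure Ω) {ω : Ω | t < τ ω} := by
              rw [lintegral_const_mul _ (measurable_one.indicator (hτsetmeas t)),
                lintegral_indicator_one (hτsetmeas t)]
          _ = ENNReal.ofReal (l * Real.exp (-(l * t)) * ((volume : Measure Ω) {ω : Ω | t < τ ω}).toReal) := by
              rw [ENNReal.ofReal_mul (by positivity), ENNReal.ofReal_toReal (measure_ne_top _ _)]

lemma subst_aux (G : ℝ → ℝ) {l : ℝ} (hl : 0 < l) :
    ∫ t in Set.Ioi (0:ℝ), l * Real.exp (-(l * t)) * G t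
      = ∫ s in Set.Ioi (0:ℝ), Real.exp (-s) * G (s / l) := by
  have h := integral_comp_mul_left_Ioi (fun s => Real.exp (-s) * G (s / l)) 0 hl
  rw [mul_zero] at h
  have h2 : ∀ x : ℝ, Real.exp (-(l * x)) * G (l * x / l) = Real.exp (-(l * x)) * G x :=
    fun x => by rw [mul_div_cancel_left₀ _ hl.ne']
  simp_rw [h2] at h
  simp_rw [mul_assoc]
  rw [MeasureTheory.integral_const_mul, h, smul_eq_mul, ← mul_assoc,
    mul_inv_cancel₀ hl.ne', one_mul]

end Aux

/-- For every `θ > 0`, `lim_{m→∞} m · E[1 − e^{−θτ/m^{1/α}}] = Γ(1−α) θ^α`,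
the limit being over positive integers `m`. -/
theorem lim_m_mul_one_sub_exp_moment
    {Ω : Type*} [MeasureSpace Ω] [IsProbabilityMeasure (ℙ : Measure Ω)]
    (α : ℝ) (hα : α ∈ Set.Ioo (0 : ℝ) 1)
    (τ : Ω → ℝ) (hτmeas : Measurable τ) (hτnn : ∀ ω, 0 ≤ τ ω)
    (Lf : ℝ → ℝ) (hLf : Filter.Tendsto Lf Filter.atTop (nhds 1))
    (htail : ∀ t : ℝ, 0 < t → ℙ {ω | t < τ ω} = ENNReal.ofReal (Lf t / t ^ α))
    (θ : ℝ) (hθ : 0 < θ) :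
    Filter.Tendsto
      (fun m : ℕ => (m : ℝ) * ∫ ω, (1 - Real.exp (-(θ * τ ω / (m : ℝ) ^ (1 / α)))) ∂ℙ)
      Filter.atTop
      (nhds (Real.Gamma (1 - α) * θ ^ α)) := by
  obtain ⟨hα0, hα1⟩ := hα
  set G : ℝ → ℝ := fun t => ((volume : Measure Ω) {ω : Ω | t < τ ω}).toReal with hGdef
  have hGanti : Antitone G := fun s t hst =>
    ENNReal.toReal_mono (measure_ne_top _ _) (measure_mono fun ω h => lt_of_le_of_lt hst h)
  have hGmeas : Measurable G := hGanti.measurable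
  have hGnn : ∀ t, 0 ≤ G t := fun t => ENNReal.toReal_nonneg
  have hGle1 : ∀ t, G t ≤ 1 := fun t =>
    (ENNReal.toReal_mono ENNReal.one_ne_top prob_le_one).trans_eq ENNReal.toReal_one
  have hH : ∀ u : ℝ, 0 < u → u ^ α * G u = max (Lf u) 0 := by
    intro u hu
    have hup : (0:ℝ) < u ^ α := Real.rpow_pos_of_pos hu α
    have : G u = max (Lf u / u ^ α) 0 := by
      have hGu : G u = (ENNReal.ofReal (Lf u / u ^ α)).toReal := by
        simp only [hGdef]
        rw [htail u hu]
      rw [hGu]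
      exact ENNReal.toReal_ofReal'
    rw [this, mul_max_of_nonneg _ _ hup.le, mul_zero]
    congr 1
    field_simp
  -- global bound on u^α * G u
  obtain ⟨T, hT⟩ : ∃ T : ℝ, ∀ u ≥ T, Lf u ≤ 2 :=
    Filter.eventually_atTop.1 (hLf.eventually (eventually_le_nhds one_lt_two))
  set T' : ℝ := max T 1 with hT'
  set C : ℝ := max 2 (T' ^ α) with hCdef
  have hC : ∀ u : ℝ, 0 < u → u ^ α * G u ≤ C := by
    intro u hu
    rcases le_or_gt u T' with h | h
    · have h1 : u ^ α * G u ≤ u ^ α * 1 :=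
        mul_le_mul_of_nonneg_left (hGle1 u) (Real.rpow_pos_of_pos hu α).le
      have h2 : u ^ α ≤ T' ^ α := Real.rpow_le_rpow hu.le h hα0.le
      calc u ^ α * G u ≤ u ^ α * 1 := h1
        _ = u ^ α := mul_one _
        _ ≤ T' ^ α := h2
        _ ≤ C := le_max_right _ _
    · rw [hH u hu]
      exact le_trans (max_le (hT u (le_trans (le_max_left T 1) h.le)) (by norm_num))
        (le_max_left _ _)
  -- the family of integrands
  set f : ℕ → ℝ → ℝ := fun m s => (m:ℝ) * (Real.exp (-s) * G (s / (θ / (m:ℝ) ^ (1/α)))) with hf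
  have hlpos : ∀ m : ℕ, 1 ≤ m → 0 < θ / (m:ℝ) ^ (1/α) := fun m hm =>
    div_pos hθ (Real.rpow_pos_of_pos (by exact_mod_cast hm) _)
  have hmθ : ∀ m : ℕ, 1 ≤ m → (m:ℝ) * (θ / (m:ℝ) ^ (1/α)) ^ α = θ ^ α := by
    intro m hm
    have hm0 : (0:ℝ) < m := by exact_mod_cast hm
    rw [Real.div_rpow hθ.le (Real.rpow_pos_of_pos hm0 _).le, ← Real.rpow_mul hm0.le,
      one_div_mul_cancel hα0.ne', Real.rpow_one]
    field_simp
  have hkey : ∀ m : ℕ, 1 ≤ m → ∀ s : ℝ, 0 < s →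
      f m s = (Real.exp (-s) * (θ ^ α * s ^ (-α)))
        * ((s / (θ / (m:ℝ) ^ (1/α))) ^ α * G (s / (θ / (m:ℝ) ^ (1/α)))) := by
    intro m hm s hs
    have hl : 0 < θ / (m:ℝ) ^ (1/α) := hlpos m hm
    have h1 : (s / (θ / (m:ℝ) ^ (1/α))) ^ α = s ^ α / (θ / (m:ℝ) ^ (1/α)) ^ α :=
      Real.div_rpow hs.le hl.le α
    have hm' : (m:ℝ) * (θ / (m:ℝ) ^ (1/α)) ^ α = θ ^ α := hmθ m hm
    have hsα : (0:ℝ) < s ^ α := Real.rpow_pos_of_pos hs α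
    have hlα : (0:ℝ) < (θ / (m:ℝ) ^ (1/α)) ^ α := Real.rpow_pos_of_pos hl α
    have hneg : s ^ (-α) = (s ^ α)⁻¹ := Real.rpow_neg hs.le α
    rw [hf]
    simp only
    rw [h1, hneg, ← hm']
    field_simp
  -- the dominating function
  set bound : ℝ → ℝ := fun s => C * θ ^ α * (Real.exp (-s) * s ^ (-α)) with hbounddef
  have hbound_int : Integrable bound (volume.restrict (Set.Ioi 0)) := by
    have h1' : IntegrableOn (fun s : ℝ => Real.exp (-s) * s ^ (-α)) (Set.Ioi 0) := by
      have he : (-α) = (1 - α) - 1 := by ring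
      rw [he]
      exact Real.GammaIntegral_convergent (by linarith)
    exact h1'.const_mul _
  set flim : ℝ → ℝ := fun s => θ ^ α * (Real.exp (-s) * s ^ (-α)) with hflimdef
  have hF_meas : ∀ᶠ m in Filter.atTop,
      AEStronglyMeasurable (f m) (volume.restrict (Set.Ioi 0)) := by
    refine Filter.Eventually.of_forall fun m => ?_
    exact ((measurable_const.mul ((Real.measurable_exp.comp measurable_neg).mul
      (hGmeas.comp (measurable_id.div_const _)))) : Measurable (f m)).aestronglyMeasurable
  have h_bound : ∀ᶠ m in Filter.atTop,
      ∀ᵐ s ∂(volume.restrict (Set.Ioi 0)), ‖f m s‖ ≤ bound s := by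
    filter_upwards [Filter.eventually_ge_atTop 1] with m hm
    rw [ae_restrict_iff' measurableSet_Ioi]
    refine Filter.Eventually.of_forall fun s hs => ?_
    have hs : (0:ℝ) < s := hs
    have hu : 0 < s / (θ / (m:ℝ) ^ (1/α)) := div_pos hs (hlpos m hm)
    rw [hkey m hm s hs, Real.norm_eq_abs, abs_of_nonneg (by positivity)]
    calc (Real.exp (-s) * (θ ^ α * s ^ (-α)))
          * ((s / (θ / (m:ℝ) ^ (1/α))) ^ α * G (s / (θ / (m:ℝ) ^ (1/α))))
        ≤ (Real.exp (-s) * (θ ^ α * s ^ (-α))) * C :=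
          mul_le_mul_of_nonneg_left (hC _ hu) (by positivity)
      _ = bound s := by rw [hbounddef]; ring
  have h_lim : ∀ᵐ s ∂(volume.restrict (Set.Ioi 0)),
      Filter.Tendsto (fun m : ℕ => f m s) Filter.atTop (nhds (flim s)) := by
    rw [ae_restrict_iff' measurableSet_Ioi]
    refine Filter.Eventually.of_forall fun s hs => ?_
    have hs : (0:ℝ) < s := hs
    have hu_tendsto : Filter.Tendsto (fun m : ℕ => s / (θ / (m:ℝ) ^ (1/α)))
        Filter.atTop Filter.atTop := by
      have h1 : Filter.Tendsto (fun m : ℕ => ((m:ℝ)) ^ (1/α)) Filter.atTop Filter.atTop :=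
        (tendsto_rpow_atTop (by positivity : (0:ℝ) < 1/α)).comp
          tendsto_natCast_atTop_atTop
      have h2 : (fun m : ℕ => s / (θ / (m:ℝ) ^ (1/α)))
          = fun m : ℕ => (s / θ) * ((m:ℝ) ^ (1/α)) := by
        funext m
        rw [div_div_eq_mul_div, mul_div_right_comm]
      rw [h2]
      exact h1.const_mul_atTop (div_pos hs hθ)
    have hHtendsto : Filter.Tendsto (fun u : ℝ => u ^ α * G u) Filter.atTop (nhds 1) := by
      have h1 : Filter.Tendsto (fun u : ℝ => max (Lf u) 0) Filter.atTop (nhds (max 1 0)) :=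
        hLf.max tendsto_const_nhds
      rw [max_eq_left zero_le_one] at h1
      refine h1.congr' ?_
      filter_upwards [Filter.eventually_gt_atTop 0] with u hu
      exact (hH u hu).symm
    have hcomp := hHtendsto.comp hu_tendsto
    have hfin : Filter.Tendsto
        (fun m : ℕ => (Real.exp (-s) * (θ ^ α * s ^ (-α)))
          * ((s / (θ / (m:ℝ) ^ (1/α))) ^ α * G (s / (θ / (m:ℝ) ^ (1/α)))))
        Filter.atTop (nhds ((Real.exp (-s) * (θ ^ α * s ^ (-α))) * 1)) :=
      hcomp.const_mul _
    have hval : (Real.exp (-s) * (θ ^ α * s ^ (-α))) * 1 = flim s := by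
      rw [hflimdef]; ring
    rw [hval] at hfin
    refine hfin.congr' ?_
    filter_upwards [Filter.eventually_ge_atTop 1] with m hm
    exact (hkey m hm s hs).symm
  have hDCT := MeasureTheory.tendsto_integral_filter_of_dominated_convergence
    (μ := volume.restrict (Set.Ioi (0:ℝ))) (F := f) (f := flim) bound hF_meas h_bound
    hbound_int h_lim
  have hflim_int : ∫ s in Set.Ioi (0:ℝ), flim s = Real.Gamma (1 - α) * θ ^ α := by
    rw [hflimdef]
    rw [MeasureTheory.integral_const_mul,
      show (fun s : ℝ => Real.exp (-s) * s ^ (-α))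
        = fun s : ℝ => Real.exp (-s) * s ^ ((1:ℝ) - α - 1) from funext fun s => by norm_num,
      ← Real.Gamma_eq_integral (by linarith), mul_comm]
  rw [hflim_int] at hDCT
  refine hDCT.congr' ?_
  filter_upwards [Filter.eventually_ge_atTop 1] with m hm
  have hl : 0 < θ / (m:ℝ) ^ (1/α) := hlpos m hm
  calc ∫ s in Set.Ioi (0:ℝ), f m s
      = (m:ℝ) * ∫ s in Set.Ioi (0:ℝ), Real.exp (-s) * G (s / (θ / (m:ℝ) ^ (1/α))) := by
        rw [hf]; exact MeasureTheory.integral_const_mul _ _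
    _ = (m:ℝ) * ∫ t in Set.Ioi (0:ℝ),
          (θ / (m:ℝ) ^ (1/α)) * Real.exp (-((θ / (m:ℝ) ^ (1/α)) * t)) * G t := by
        rw [subst_aux G hl]
    _ = (m:ℝ) * ∫ ω, (1 - Real.exp (-((θ / (m:ℝ) ^ (1/α)) * τ ω))) ∂(volume : Measure Ω) := by
        rw [fubini_aux τ hτmeas hτnn hl]
    _ = (m:ℝ) * ∫ ω, (1 - Real.exp (-(θ * τ ω / (m:ℝ) ^ (1/α)))) ∂ℙ := by
        simp only [div_mul_eq_mul_div]
end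

section
/- Almost surely, for every θ > 0, n^{−(1−ν)} Σ_{i=1}^{n} (1 − e^{−θ τ_i / n^{ν/α}}) → Γ(1−α) θ^α as n → ∞, where Γ is the Gamma function. -/
open MeasureTheory ProbabilityTheory Filter Set

lemma aux_asymp {α : ℝ} (hα0 : 0 < α) (hα1 : α < 1) {h : ℝ → ℝ}
    (hmeas : Measurable h) (h0 : ∀ t, 0 ≤ h t) (h1 : ∀ t, h t ≤ 1)
    (hlim : Tendsto (fun t => t ^ α * h t) atTop (nhds 1)) :
    Tendsto (fun lam : ℝ => lam ^ (1 - α) * ∫ t in Set.Ioi (0:ℝ), Real.exp (-(lam * t)) * h t)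
      (nhdsWithin 0 (Set.Ioi 0)) (nhds (Real.Gamma (1 - α))) := by
  have h1α : (0:ℝ) < 1 - α := by linarith
  obtain ⟨T, hT⟩ : ∃ T : ℝ, ∀ t ≥ T, t ^ α * h t ≤ 2 :=
    eventually_atTop.mp (hlim.eventually (eventually_le_nhds (by norm_num)))
  set T' : ℝ := max T 1 with hT'def
  set C : ℝ := max (T' ^ α) 2 with hCdef
  have hC : ∀ t : ℝ, 0 < t → t ^ α * h t ≤ C := by
    intro t ht
    rcases le_or_gt t T' with h' | h'
    · calc t ^ α * h t ≤ t ^ α * 1 :=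
            mul_le_mul_of_nonneg_left (h1 t) (Real.rpow_nonneg ht.le α)
      _ = t ^ α := mul_one _
      _ ≤ T' ^ α := Real.rpow_le_rpow ht.le h' hα0.le
      _ ≤ C := le_max_left _ _
    · exact le_trans (hT t (le_trans (le_max_left _ _) h'.le)) (le_max_right _ _)
  have hCnn : (0:ℝ) ≤ C := le_trans (by norm_num) (le_max_right (T' ^ α) 2)
  have hiden : ∀ lam : ℝ, 0 < lam → ∀ s : ℝ, 0 < s →
      lam ^ (-α) * h (s / lam) = s ^ ((1 - α) - 1) * ((s / lam) ^ α * h (s / lam)) := by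
    intro lam hlam s hs
    have h2 : (s / lam) ^ α = s ^ α / lam ^ α := Real.div_rpow hs.le hlam.le α
    have hsne : s ^ α ≠ 0 := (Real.rpow_pos_of_pos hs α).ne'
    have hlne : lam ^ α ≠ 0 := (Real.rpow_pos_of_pos hlam α).ne'
    have he : (1 - α) - 1 = -α := by ring
    rw [h2, he, Real.rpow_neg hs.le, Real.rpow_neg hlam.le]
    field_simp
  have key : Tendsto (fun lam : ℝ => ∫ s in Set.Ioi (0:ℝ),
        Real.exp (-s) * (lam ^ (-α) * h (s / lam)))
      (nhdsWithin 0 (Set.Ioi 0))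
      (nhds (∫ s in Set.Ioi (0:ℝ), Real.exp (-s) * s ^ ((1 - α) - 1))) := by
    apply tendsto_integral_filter_of_dominated_convergence
      (fun s => C * (Real.exp (-s) * s ^ ((1 - α) - 1)))
    · filter_upwards with lam
      exact ((Real.measurable_exp.comp measurable_neg).mul
        ((measurable_const.mul (hmeas.comp (measurable_id.div_const lam)))) ).aestronglyMeasurable
    · filter_upwards [self_mem_nhdsWithin] with lam hlam
      rw [ae_restrict_iff' measurableSet_Ioi]
      filter_upwards with s hs
      have hs' : (0:ℝ) < s := hs
      have hsl : 0 < s / lam := div_pos hs' hlam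
      have hnn : 0 ≤ Real.exp (-s) * (lam ^ (-α) * h (s / lam)) :=
        mul_nonneg (Real.exp_nonneg _)
          (mul_nonneg (Real.rpow_nonneg (le_of_lt hlam) _) (h0 _))
      rw [Real.norm_eq_abs, abs_of_nonneg hnn, hiden lam hlam s hs']
      have hb : (s / lam) ^ α * h (s / lam) ≤ C := hC _ hsl
      have hpow : 0 ≤ s ^ ((1 - α) - 1) := Real.rpow_nonneg hs'.le _
      calc Real.exp (-s) * (s ^ ((1 - α) - 1) * ((s / lam) ^ α * h (s / lam)))
          ≤ Real.exp (-s) * (s ^ ((1 - α) - 1) * C) := by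
            apply mul_le_mul_of_nonneg_left _ (Real.exp_nonneg _)
            exact mul_le_mul_of_nonneg_left hb hpow
        _ = C * (Real.exp (-s) * s ^ ((1 - α) - 1)) := by ring
    · exact (Real.GammaIntegral_convergent h1α).const_mul C
    · rw [ae_restrict_iff' measurableSet_Ioi]
      filter_upwards with s hs
      have hs' : (0:ℝ) < s := hs
      have hdiv : Tendsto (fun lam : ℝ => s / lam) (nhdsWithin 0 (Set.Ioi 0)) atTop := by
        simpa [div_eq_mul_inv] using tendsto_inv_nhdsGT_zero.const_mul_atTop hs'
      have hcomp : Tendsto (fun lam : ℝ => (s / lam) ^ α * h (s / lam))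
          (nhdsWithin 0 (Set.Ioi 0)) (nhds 1) := hlim.comp hdiv
      have : Tendsto (fun lam : ℝ => Real.exp (-s) * (s ^ ((1 - α) - 1) *
          ((s / lam) ^ α * h (s / lam)))) (nhdsWithin 0 (Set.Ioi 0))
          (nhds (Real.exp (-s) * s ^ ((1 - α) - 1))) := by
        have := (hcomp.const_mul (s ^ ((1 - α) - 1))).const_mul (Real.exp (-s))
        simpa using this
      refine this.congr' ?_
      filter_upwards [self_mem_nhdsWithin] with lam hlam
      rw [hiden lam hlam s hs']
  rw [show Real.Gamma (1 - α) = ∫ s in Set.Ioi (0:ℝ), Real.exp (-s) * s ^ ((1 - α) - 1) from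
    Real.Gamma_eq_integral h1α]
  refine key.congr' ?_
  filter_upwards [self_mem_nhdsWithin] with lam hlam
  have hlam' : (0:ℝ) < lam := hlam
  have sub := MeasureTheory.integral_comp_mul_left_Ioi
    (fun x => Real.exp (-x) * h (x / lam)) 0 hlam'
  have heq1 : ∀ t : ℝ, Real.exp (-(lam * t)) * h (lam * t / lam) =
      Real.exp (-(lam * t)) * h t := by
    intro t; rw [mul_div_cancel_left₀ _ hlam'.ne']
  simp only [mul_zero] at sub
  have sub2 : ∫ t in Set.Ioi (0:ℝ), Real.exp (-(lam * t)) * h t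
      = lam⁻¹ * ∫ x in Set.Ioi (0:ℝ), Real.exp (-x) * h (x / lam) := by
    rw [smul_eq_mul] at sub
    rw [← sub]
    exact setIntegral_congr_fun measurableSet_Ioi (fun t _ => (heq1 t).symm)
  rw [sub2, ← mul_assoc]
  have hpow : lam ^ (1 - α) * lam⁻¹ = lam ^ (-α) := by
    rw [← Real.rpow_neg_one lam, ← Real.rpow_add hlam']
    ring_nf
  rw [hpow, ← integral_const_mul]
  exact setIntegral_congr_fun measurableSet_Ioi (fun s _ => by ring)

lemma aux_layercake {Ω : Type*} [MeasureSpace Ω] [IsProbabilityMeasure (ℙ : Measure Ω)]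
    {τ : Ω → ℝ} (hτmeas : Measurable τ) (hτnn : 0 ≤ᵐ[ℙ] τ)
    {lam : ℝ} (hlam : 0 < lam) :
    ∫ ω, (1 - Real.exp (-(lam * τ ω))) ∂ℙ
      = lam * ∫ t in Set.Ioi (0:ℝ), Real.exp (-(lam * t)) * (ℙ {ω | t < τ ω}).toReal := by
  have contg : Continuous (fun t : ℝ => lam * Real.exp (-(lam * t))) :=
    continuous_const.mul (((continuous_const.mul continuous_id).neg).rexp)
  have anti : ∀ x : ℝ, (∫ t in (0:ℝ)..x, lam * Real.exp (-(lam * t)))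
      = 1 - Real.exp (-(lam * x)) := by
    intro x
    have hd : ∀ t ∈ Set.uIcc (0:ℝ) x,
        HasDerivAt (fun y => -Real.exp (-(lam * y))) (lam * Real.exp (-(lam * t))) t := by
      intro t _
      have h1 : HasDerivAt (fun y : ℝ => -(lam * y)) (-lam) t := by
        simpa using ((hasDerivAt_id t).const_mul lam).fun_neg
      have h3 : HasDerivAt (fun y => -Real.exp (-(lam * y))) (-(Real.exp (-(lam * t)) * -lam)) t :=
        (h1.exp).fun_neg
      convert h3 using 1; ring
    rw [intervalIntegral.integral_eq_sub_of_hasDerivAt hd (contg.intervalIntegrable 0 x)]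
    simp only [mul_zero, neg_zero, Real.exp_zero]
    ring
  have key := lintegral_comp_eq_lintegral_meas_lt_mul ℙ hτnn hτmeas.aemeasurable
    (fun t _ => contg.intervalIntegrable 0 t)
    (ae_of_all _ (fun t => mul_nonneg hlam.le (Real.exp_nonneg _)))
  simp_rw [anti] at key
  have meas1 : AEStronglyMeasurable (fun ω => 1 - Real.exp (-(lam * τ ω))) ℙ :=
    (measurable_const.sub (((hτmeas.const_mul lam).neg).exp)).aestronglyMeasurable
  have nn1 : 0 ≤ᵐ[ℙ] fun ω => 1 - Real.exp (-(lam * τ ω)) := by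
    filter_upwards [hτnn] with ω hω
    simp only [Pi.zero_apply] at hω ⊢
    have h2 : Real.exp (-(lam * τ ω)) ≤ 1 := by
      rw [Real.exp_le_one_iff]
      nlinarith
    linarith
  have L1 : ∫ ω, (1 - Real.exp (-(lam * τ ω))) ∂ℙ
      = (∫⁻ ω, ENNReal.ofReal (1 - Real.exp (-(lam * τ ω))) ∂ℙ).toReal :=
    integral_eq_lintegral_of_nonneg_ae nn1 meas1
  set φ : ℝ → ℝ := fun t => Real.exp (-(lam * t)) * (ℙ {ω | t < τ ω}).toReal with hφ
  have hmeasmono : Measurable (fun t : ℝ => (ℙ {ω | t < τ ω} : ENNReal)) :=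
    Antitone.measurable (fun s t hst => measure_mono (fun ω hω => lt_of_le_of_lt hst hω))
  have measφ : Measurable φ :=
    (((measurable_id.const_mul lam).neg).exp).mul hmeasmono.ennreal_toReal
  have L2 : ∫ t in Set.Ioi (0:ℝ), φ t
      = (∫⁻ t in Set.Ioi (0:ℝ), ENNReal.ofReal (φ t)).toReal :=
    integral_eq_lintegral_of_nonneg_ae
      (ae_of_all _ (fun t => mul_nonneg (Real.exp_nonneg _) ENNReal.toReal_nonneg))
      measφ.aestronglyMeasurable
  have ofφ : ∀ t, ENNReal.ofReal (φ t)
      = ENNReal.ofReal (Real.exp (-(lam * t))) * ℙ {ω | t < τ ω} := by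
    intro t
    rw [hφ]
    rw [ENNReal.ofReal_mul (Real.exp_nonneg _), ENNReal.ofReal_toReal (measure_ne_top _ _)]
  have rhs_eq : (∫⁻ t in Set.Ioi (0:ℝ), ℙ {a | t < τ a}
        * ENNReal.ofReal (lam * Real.exp (-(lam * t))))
      = ENNReal.ofReal lam * ∫⁻ t in Set.Ioi (0:ℝ), ENNReal.ofReal (φ t) := by
    rw [← lintegral_const_mul _ (by
      exact ENNReal.measurable_ofReal.comp measφ)]
    apply lintegral_congr
    intro t
    rw [ofφ, ENNReal.ofReal_mul hlam.le]
    ring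
  rw [rhs_eq] at key
  have fin2 : (∫⁻ t in Set.Ioi (0:ℝ), ENNReal.ofReal (φ t)) ≠ ⊤ := by
    intro htop
    have h1 : (∫⁻ ω, ENNReal.ofReal (1 - Real.exp (-(lam * τ ω))) ∂ℙ) ≤ 1 := by
      calc (∫⁻ ω, ENNReal.ofReal (1 - Real.exp (-(lam * τ ω))) ∂ℙ)
          ≤ ∫⁻ _, 1 ∂ℙ := lintegral_mono (fun ω => by
            rw [show (1:ENNReal) = ENNReal.ofReal 1 by simp]
            exact ENNReal.ofReal_le_ofReal (by
              have := Real.exp_nonneg (-(lam * τ ω)); linarith))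
        _ = 1 := by simp
    rw [key, htop, ENNReal.mul_top (ENNReal.ofReal_pos.mpr hlam).ne'] at h1
    exact (by simp at h1 : False)
  rw [L1, key, ENNReal.toReal_mul, ENNReal.toReal_ofReal hlam.le, ← L2]

lemma aux_psi_asymp {Ω : Type*} [MeasureSpace Ω] [IsProbabilityMeasure (ℙ : Measure Ω)]
    {α : ℝ} (hα0 : 0 < α) (hα1 : α < 1)
    {τ : Ω → ℝ} (hτmeas : Measurable τ) (hτnn : ∀ ω, 0 ≤ τ ω)
    {Lf : ℝ → ℝ} (hLf : Tendsto Lf atTop (nhds 1))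
    (htail : ∀ t : ℝ, 0 < t → ℙ {ω | t < τ ω} = ENNReal.ofReal (Lf t / t ^ α)) :
    Tendsto (fun lam : ℝ => lam ^ (-α) * ∫ ω, (1 - Real.exp (-(lam * τ ω))) ∂ℙ)
      (nhdsWithin 0 (Set.Ioi 0)) (nhds (Real.Gamma (1 - α))) := by
  set h : ℝ → ℝ := fun t => (ℙ {ω | t < τ ω}).toReal with hh
  have hmono : Measurable (fun t : ℝ => (ℙ {ω | t < τ ω} : ENNReal)) :=
    Antitone.measurable (fun s t hst => measure_mono (fun ω hω => lt_of_le_of_lt hst hω))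
  have hmeas : Measurable h := hmono.ennreal_toReal
  have h0 : ∀ t, 0 ≤ h t := fun t => ENNReal.toReal_nonneg
  have h1 : ∀ t, h t ≤ 1 := by
    intro t
    rw [hh]
    simp only
    rw [show (1:ℝ) = (1:ENNReal).toReal by simp]
    exact ENNReal.toReal_mono ENNReal.one_ne_top prob_le_one
  have hlim : Tendsto (fun t => t ^ α * h t) atTop (nhds 1) := by
    refine hLf.congr' ?_
    filter_upwards [hLf.eventually (eventually_ge_nhds (by norm_num : (0:ℝ) < 1)),
      eventually_gt_atTop (0:ℝ)] with t hLt ht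
    have hpow : (0:ℝ) < t ^ α := Real.rpow_pos_of_pos ht α
    have hht : h t = Lf t / t ^ α := by
      rw [hh]
      simp only
      rw [htail t ht, ENNReal.toReal_ofReal (div_nonneg (by linarith) hpow.le)]
    rw [hht, mul_comm, div_mul_cancel₀ _ hpow.ne']
  have lemA := aux_asymp hα0 hα1 hmeas h0 h1 hlim
  refine lemA.congr' ?_
  filter_upwards [self_mem_nhdsWithin] with lam hlam
  have hlam' : (0:ℝ) < lam := hlam
  rw [aux_layercake hτmeas (ae_of_all _ hτnn) hlam', ← mul_assoc]
  congr 1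
  rw [show lam ^ (-α) * lam = lam ^ (-α) * lam ^ (1:ℝ) by rw [Real.rpow_one],
    ← Real.rpow_add hlam']
  ring_nf

lemma aux_det {c v u : ℕ → ℝ} {L : ℝ} (hv : ∀ k, 0 < v k)
    (hc : Tendsto c atTop (nhds L))
    (hev : ∀ j : ℕ, ∀ᶠ k in Filter.atTop, |u k - c k * v k| < ((j:ℝ)+1)⁻¹ * v k) :
    Tendsto (fun k => u k / v k) atTop (nhds L) := by
  rw [Metric.tendsto_atTop] at hc ⊢
  intro ε hε
  obtain ⟨j, hj⟩ := exists_nat_gt (2/ε)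
  have hj2 : ((j:ℝ)+1)⁻¹ < ε/2 := by
    have h0 : (0:ℝ) < 2/ε := by positivity
    have h4 : ((j:ℝ)+1)⁻¹ < (2/ε)⁻¹ := by
      apply inv_strictAnti₀ h0
      linarith
    rwa [inv_div] at h4
  obtain ⟨K1, hK1⟩ := hc (ε/2) (by linarith)
  obtain ⟨K2, hK2⟩ := eventually_atTop.mp (hev j)
  refine ⟨max K1 K2, fun k hk => ?_⟩
  have h1 := hK1 k (le_trans (le_max_left _ _) hk)
  have h2 := hK2 k (le_trans (le_max_right _ _) hk)
  rw [Real.dist_eq] at h1 ⊢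
  have hvk := hv k
  have h3 : |u k / v k - c k| < ε/2 := by
    have he : u k / v k - c k = (u k - c k * v k) / v k := by field_simp
    rw [he, abs_div, abs_of_pos hvk, div_lt_iff₀ hvk]
    calc |u k - c k * v k| < ((j:ℝ)+1)⁻¹ * v k := h2
      _ ≤ ε/2 * v k := by nlinarith
  calc |u k / v k - L| ≤ |u k / v k - c k| + |c k - L| := abs_sub_le _ _ _
    _ < ε/2 + ε/2 := by exact add_lt_add h3 h1
    _ = ε := by ring

lemma aux_subseq {Ω : Type*} [MeasureSpace Ω] [IsProbabilityMeasure (ℙ : Measure Ω)]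
    {α ν : ℝ} (hα0 : 0 < α) (hα1 : α < 1) (hν0 : 0 < ν) (hν1 : ν < 1)
    {τ : Ω → ℝ} (hτmeas : Measurable τ) (hτnn : ∀ ω, 0 ≤ τ ω)
    {Lf : ℝ → ℝ} (hLf : Tendsto Lf atTop (nhds 1))
    (htail : ∀ t : ℝ, 0 < t → ℙ {ω | t < τ ω} = ENNReal.ofReal (Lf t / t ^ α))
    {τs : ℕ → Ω → ℝ} (hτsmeas : ∀ i, Measurable (τs i))
    (hiid : iIndepFun τs ℙ)
    (hident : ∀ i, IdentDistrib (τs i) τ ℙ ℙ)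
    {m : ℕ} (hm : 1 < (m:ℝ) * (1 - ν))
    {q : ℝ} (hq : 0 < q) :
    ∀ᵐ ω ∂ℙ, Tendsto (fun k : ℕ =>
        ((((k+1)^m : ℕ)):ℝ) ^ (-(1-ν)) * ∑ i ∈ Finset.Icc 1 ((k+1)^m),
          (1 - Real.exp (-(q / ((((k+1)^m : ℕ)):ℝ) ^ (ν/α) * τs i ω))))
      atTop (nhds (Real.Gamma (1-α) * q ^ α)) := by
  have hν1' : (0:ℝ) < 1 - ν := by linarith
  set ψ : ℝ → ℝ := fun lam => ∫ ω, (1 - Real.exp (-(lam * τ ω))) ∂ℙ with hψdef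
  set n : ℕ → ℕ := fun k => (k+1)^m with hndef
  set N : ℕ → ℝ := fun k => ((n k : ℕ) : ℝ) with hNdef
  have hm0 : m ≠ 0 := by
    intro h; rw [h] at hm; norm_num at hm
  have hn1 : ∀ k, 1 ≤ n k := fun k => Nat.one_le_pow _ _ (Nat.succ_pos k)
  have hN0 : ∀ k, (0:ℝ) < N k := fun k =>
    Nat.cast_pos.mpr (lt_of_lt_of_le Nat.zero_lt_one (hn1 k))
  have hN1 : ∀ k, (1:ℝ) ≤ N k := fun k => by
    exact_mod_cast Nat.one_le_cast.mpr (hn1 k)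
  set lamk : ℕ → ℝ := fun k => q / (N k) ^ (ν/α) with hlamdef
  have hlamk0 : ∀ k, 0 < lamk k := fun k =>
    div_pos hq (Real.rpow_pos_of_pos (hN0 k) _)
  -- N tends to infinity
  have hNtop : Tendsto N atTop atTop := by
    apply tendsto_natCast_atTop_atTop.comp
    apply tendsto_atTop_mono (fun k => ?_) tendsto_id
    calc (k:ℕ) ≤ k + 1 := Nat.le_succ k
      _ ≤ (k+1)^m := Nat.le_self_pow hm0 _
  have hlam_tendsto : Tendsto lamk atTop (nhdsWithin 0 (Set.Ioi 0)) := by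
    rw [tendsto_nhdsWithin_iff]
    constructor
    · apply Tendsto.div_atTop (tendsto_const_nhds (x := q))
      exact (tendsto_rpow_atTop (by positivity)).comp hNtop
    · exact Eventually.of_forall (fun k => hlamk0 k)
  -- the deterministic centering sequence
  set c : ℕ → ℝ := fun k => (N k) ^ ν * ψ (lamk k) with hcdef
  have hxid : ∀ k, (lamk k) ^ (-α) = q ^ (-α) * (N k) ^ ν := by
    intro k
    have hP : (0:ℝ) < (N k) ^ (ν/α) := Real.rpow_pos_of_pos (hN0 k) _
    have hPP : ((N k) ^ (ν/α)) ^ α = (N k) ^ ν := by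
      rw [← Real.rpow_mul (hN0 k).le, div_mul_cancel₀ _ hα0.ne']
    show (q / N k ^ (ν/α)) ^ (-α) = q ^ (-α) * N k ^ ν
    rw [Real.rpow_neg (div_pos hq hP).le, Real.div_rpow hq.le hP.le, hPP, inv_div,
      div_eq_mul_inv, ← Real.rpow_neg hq.le, mul_comm]
  have hc : Tendsto c atTop (nhds (Real.Gamma (1-α) * q ^ α)) := by
    have hbase := (aux_psi_asymp hα0 hα1 hτmeas hτnn hLf htail).comp hlam_tendsto
    have hmul := hbase.const_mul (q ^ α)
    rw [show Real.Gamma (1-α) * q ^ α = q ^ α * Real.Gamma (1-α) from mul_comm _ _]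
    apply hmul.congr
    intro k
    show q ^ α * ((lamk k) ^ (-α) * ψ (lamk k)) = c k
    rw [hxid k, ← mul_assoc, ← mul_assoc, ← Real.rpow_add hq,
      show α + -α = 0 by ring, Real.rpow_zero, one_mul]
  -- nonnegativity facts
  have hτsnn : ∀ i, ∀ᵐ ω ∂ℙ, 0 ≤ τs i ω := by
    intro i
    have hset : ℙ {ω | τs i ω < 0} = 0 := by
      have h1 : ℙ {ω | τs i ω < 0} = Measure.map (τs i) ℙ (Set.Iio 0) := by
        rw [Measure.map_apply (hτsmeas i) measurableSet_Iio]
        rfl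
      rw [h1, (hident i).map_eq, Measure.map_apply hτmeas measurableSet_Iio]
      have : τ ⁻¹' (Set.Iio 0) = ∅ := by
        ext ω; simp only [Set.mem_preimage, Set.mem_Iio, Set.mem_empty_iff_false, iff_false,
          not_lt]
        exact hτnn ω
      rw [this]; simp
    rw [ae_iff]
    convert hset using 2
    ext ω; simp
  -- the summands
  set X : ℕ → ℕ → Ω → ℝ := fun i k ω => 1 - Real.exp (-(lamk k * τs i ω)) with hXdef
  have hXmeas : ∀ i k, Measurable (X i k) := fun i k =>
    measurable_const.sub (((hτsmeas i).const_mul (lamk k)).neg.exp)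
  have hXbd : ∀ i k, ∀ᵐ ω ∂ℙ, 0 ≤ X i k ω ∧ X i k ω ≤ 1 := by
    intro i k
    filter_upwards [hτsnn i] with ω hω
    have h1 : Real.exp (-(lamk k * τs i ω)) ≤ 1 := by
      rw [Real.exp_le_one_iff]
      have := (hlamk0 k).le
      nlinarith
    have h2 : 0 < Real.exp (-(lamk k * τs i ω)) := Real.exp_pos _
    simp only [hXdef]
    constructor <;> linarith
  have hXmem : ∀ i k, MemLp (X i k) 2 ℙ := by
    intro i k
    apply MemLp.of_bound (hXmeas i k).aestronglyMeasurable 1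
    filter_upwards [hXbd i k] with ω hω
    rw [Real.norm_eq_abs, abs_le]
    constructor <;> linarith [hω.1, hω.2]
  have hEX : ∀ i k, ∫ ω, X i k ω ∂ℙ = ψ (lamk k) := by
    intro i k
    have hg : Measurable (fun x : ℝ => 1 - Real.exp (-(lamk k * x))) :=
      measurable_const.sub ((measurable_id.const_mul (lamk k)).neg.exp)
    exact ((hident i).comp hg).integral_eq
  have hψnn : ∀ k, 0 ≤ ψ (lamk k) := by
    intro k
    rw [← hEX 0 k]
    apply integral_nonneg_of_ae
    filter_upwards [hXbd 0 k] with ω hω using hω.1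
  have hVar : ∀ i k, variance (X i k) ℙ ≤ ψ (lamk k) := by
    intro i k
    refine le_trans (variance_le_expectation_sq (hXmeas i k).aestronglyMeasurable) ?_
    rw [← hEX i k]
    apply integral_mono_ae ((hXmem i k).integrable_sq) ((hXmem i k).integrable one_le_two)
    filter_upwards [hXbd i k] with ω hω
    show X i k ω ^ 2 ≤ X i k ω
    nlinarith [hω.1, hω.2]
  -- the sums
  set S : ℕ → Ω → ℝ := fun k ω => ∑ i ∈ Finset.Icc 1 (n k), X i k ω with hSdef
  have hSmem : ∀ k, MemLp (S k) 2 ℙ := by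
    intro k
    have h := memLp_finset_sum' (μ := ℙ) (Finset.Icc 1 (n k)) (fun i _ => hXmem i k)
    convert h using 1
    funext ω
    rw [hSdef]
    simp [Finset.sum_apply]
  have hES : ∀ k, ∫ ω, S k ω ∂ℙ = N k * ψ (lamk k) := by
    intro k
    simp only [hSdef]
    rw [integral_finset_sum _ (fun i _ => (hXmem i k).integrable one_le_two)]
    rw [Finset.sum_congr rfl (fun i _ => hEX i k), Finset.sum_const, Nat.card_Icc]
    simp [hNdef, nsmul_eq_mul]
  have hVarS : ∀ k, variance (S k) ℙ ≤ N k * ψ (lamk k) := by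
    intro k
    have hindep : Set.Pairwise ↑(Finset.Icc 1 (n k))
        (fun i j => IndepFun (fun ω => X i k ω) (fun ω => X j k ω) ℙ) := by
      intro i _ j _ hij
      have hg : Measurable (fun x : ℝ => 1 - Real.exp (-(lamk k * x))) :=
        measurable_const.sub ((measurable_id.const_mul (lamk k)).neg.exp)
      exact (hiid.indepFun hij).comp hg hg
    have := IndepFun.variance_sum (μ := ℙ) (X := fun i => X i k)
      (s := Finset.Icc 1 (n k)) (fun i _ => hXmem i k) hindep
    have hsum : variance (S k) ℙ = ∑ i ∈ Finset.Icc 1 (n k), variance (X i k) ℙ := by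
      rw [← this]
      congr 1
      funext ω
      rw [hSdef]
      simp [Finset.sum_apply]
    rw [hsum]
    calc ∑ i ∈ Finset.Icc 1 (n k), variance (X i k) ℙ
        ≤ ∑ _i ∈ Finset.Icc 1 (n k), ψ (lamk k) :=
          Finset.sum_le_sum (fun i _ => hVar i k)
      _ = N k * ψ (lamk k) := by
          rw [Finset.sum_const, Nat.card_Icc]
          simp [hNdef, nsmul_eq_mul]
  -- bound on c
  obtain ⟨B, hB⟩ : ∃ B : ℝ, ∀ k, c k ≤ B := by
    obtain ⟨B, hB⟩ := hc.bddAbove_range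
    exact ⟨B, fun k => hB (Set.mem_range_self k)⟩
  -- rpow facts about N
  have hNpow : ∀ k, (N k) ^ (-(1-ν)) = ((k:ℝ)+1) ^ (-((m:ℝ) * (1-ν))) := by
    intro k
    have hNk : N k = ((k:ℝ)+1) ^ (m:ℝ) := by
      rw [hNdef, hndef]
      push_cast
      rw [Real.rpow_natCast]
    rw [hNk, ← Real.rpow_mul (by positivity)]
    ring_nf
  -- Chebyshev events
  set A : ℕ → ℕ → Set Ω := fun j k =>
    {ω | ((j:ℝ)+1)⁻¹ * (N k) ^ (1-ν) ≤ |S k ω - N k * ψ (lamk k)|} with hAdef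
  have cheb : ∀ j k, ℙ (A j k) ≤
      ENNReal.ofReal ((((j:ℝ)+1)^2 * (max B 0)) * ((k:ℝ)+1) ^ (-((m:ℝ) * (1-ν)))) := by
    intro j k
    have hεpos : (0:ℝ) < ((j:ℝ)+1)⁻¹ * (N k) ^ (1-ν) := by
      have := Real.rpow_pos_of_pos (hN0 k) (1-ν)
      positivity
    have hch := meas_ge_le_variance_div_sq (hSmem k) hεpos
    rw [hES k] at hch
    refine le_trans hch (ENNReal.ofReal_le_ofReal ?_)
    rw [div_le_iff₀ (by positivity)]
    have hexp : (((j:ℝ)+1)⁻¹ * (N k) ^ (1-ν)) ^ 2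
        = (((j:ℝ)+1)^2)⁻¹ * ((N k) ^ (1-ν) * (N k) ^ (1-ν)) := by
      have hj0 : ((j:ℝ)+1) ≠ 0 := by positivity
      field_simp
    have key2 : (N k) * ψ (lamk k) ≤ (max B 0) * (N k) ^ ((1:ℝ)-ν) := by
      have h1 : c k ≤ max B 0 := le_trans (hB k) (le_max_left _ _)
      calc (N k) * ψ (lamk k) = (N k) ^ ν * ψ (lamk k) * (N k) ^ ((1:ℝ)-ν) := by
            rw [mul_comm ((N k) ^ ν) (ψ (lamk k)), mul_assoc, ← Real.rpow_add (hN0 k),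
              show ν + (1 - ν) = 1 by ring, Real.rpow_one]
            ring
        _ ≤ (max B 0) * (N k) ^ ((1:ℝ)-ν) := by
            have h3 : (0:ℝ) ≤ (N k) ^ ((1:ℝ)-ν) := (Real.rpow_pos_of_pos (hN0 k) _).le
            exact mul_le_mul_of_nonneg_right h1 h3
    have hNe : ((j:ℝ)+1)^2 ≠ 0 := by positivity
    calc variance (S k) ℙ ≤ N k * ψ (lamk k) := hVarS k
      _ ≤ (max B 0) * (N k) ^ ((1:ℝ)-ν) := key2
      _ = ((((j:ℝ)+1)^2 * (max B 0)) * ((k:ℝ)+1) ^ (-((m:ℝ) * (1-ν))))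
            * ((((j:ℝ)+1)⁻¹ * (N k) ^ (1-ν)) ^ 2) := by
          rw [hexp, ← hNpow k]
          have h6 : (N k) ^ (-((1:ℝ)-ν)) * ((N k) ^ ((1:ℝ)-ν) * (N k) ^ ((1:ℝ)-ν))
              = (N k) ^ ((1:ℝ)-ν) := by
            rw [← Real.rpow_add (hN0 k), ← Real.rpow_add (hN0 k),
              show -(1 - ν) + (1 - ν + (1 - ν)) = 1 - ν by ring]
          calc (max B 0) * (N k) ^ ((1:ℝ)-ν)
              = (max B 0) * ((N k) ^ (-((1:ℝ)-ν)) * ((N k) ^ ((1:ℝ)-ν) * (N k) ^ ((1:ℝ)-ν)))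
                * (((j:ℝ)+1)^2 * (((j:ℝ)+1)^2)⁻¹) := by
                rw [h6, mul_inv_cancel₀ hNe, mul_one]
            _ = ((((j:ℝ)+1)^2 * (max B 0)) * (N k) ^ (-((1:ℝ)-ν)))
                * ((((j:ℝ)+1)^2)⁻¹ * ((N k) ^ ((1:ℝ)-ν) * (N k) ^ ((1:ℝ)-ν))) := by ring
  -- summability
  have hsb : Summable (fun k : ℕ => ((k:ℝ)+1) ^ (-((m:ℝ)*(1-ν)))) := by
    have h1 : Summable (fun n : ℕ => (n:ℝ) ^ (-((m:ℝ)*(1-ν)))) :=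
      Real.summable_nat_rpow.mpr (by linarith)
    have h2 := h1.comp_injective (add_left_injective 1)
    refine h2.congr (fun k => ?_)
    simp [Function.comp]
  have hsum : ∀ j : ℕ, (∑' k, ℙ (A j k)) ≠ ⊤ := by
    intro j
    have hb : Summable (fun k : ℕ =>
        (((j:ℝ)+1)^2 * (max B 0)) * ((k:ℝ)+1) ^ (-((m:ℝ)*(1-ν)))) := hsb.mul_left _
    refine ne_top_of_le_ne_top ?_ (ENNReal.tsum_le_tsum (fun k => cheb j k))
    exact ENNReal.tsum_coe_ne_top_iff_summable.mpr hb.toNNReal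
  have hae : ∀ᵐ ω ∂ℙ, ∀ j : ℕ, ∀ᶠ k in atTop, ω ∉ A j k :=
    ae_all_iff.mpr (fun j => ae_eventually_notMem (hsum j))
  have hcv : ∀ k, c k * (N k) ^ ((1:ℝ)-ν) = N k * ψ (lamk k) := by
    intro k
    show (N k ^ ν * ψ (lamk k)) * N k ^ ((1:ℝ)-ν) = N k * ψ (lamk k)
    rw [mul_comm (N k ^ ν) (ψ (lamk k)), mul_assoc, ← Real.rpow_add (hN0 k),
      show ν + (1 - ν) = 1 by ring, Real.rpow_one]
    ring
  filter_upwards [hae] with ω hω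
  have hv : ∀ k, (0:ℝ) < (N k) ^ ((1:ℝ)-ν) := fun k => Real.rpow_pos_of_pos (hN0 k) _
  have hev : ∀ j : ℕ, ∀ᶠ k in atTop,
      |S k ω - c k * ((N k) ^ ((1:ℝ)-ν))| < ((j:ℝ)+1)⁻¹ * ((N k) ^ ((1:ℝ)-ν)) := by
    intro j
    filter_upwards [hω j] with k hk
    simp only [hAdef, Set.mem_setOf_eq, not_le] at hk
    rw [hcv k]
    exact hk
  have hdet := aux_det (u := fun k => S k ω) hv hc hev
  refine hdet.congr (fun k => ?_)
  show S k ω / (N k) ^ ((1:ℝ)-ν) = _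
  rw [div_eq_inv_mul, ← Real.rpow_neg (hN0 k).le]

lemma aux_sandwich {α ν : ℝ} (hα0 : 0 < α) (hα1 : α < 1) (hν0 : 0 < ν) (hν1 : ν < 1)
    {m : ℕ} (hm0 : m ≠ 0) {a : ℕ → ℝ} (ha : ∀ i, 0 ≤ a i)
    (H : ∀ q : ℚ, 0 < (q:ℝ) → Tendsto (fun k : ℕ =>
        ((((k+1)^m : ℕ)):ℝ) ^ (-(1-ν)) * ∑ i ∈ Finset.Icc 1 ((k+1)^m),
          (1 - Real.exp (-((q:ℝ) / ((((k+1)^m : ℕ)):ℝ) ^ (ν/α) * a i))))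
      atTop (nhds (Real.Gamma (1-α) * (q:ℝ) ^ α)))
    {θ : ℝ} (hθ : 0 < θ) :
    Tendsto (fun n : ℕ => (n:ℝ) ^ (-(1-ν)) *
        ∑ i ∈ Finset.Icc 1 n, (1 - Real.exp (-(θ * a i / (n:ℝ) ^ (ν/α)))))
      atTop (nhds (Real.Gamma (1-α) * θ ^ α)) := by
  have hΓ : 0 < Real.Gamma (1-α) := Real.Gamma_pos_of_pos (by linarith)
  set Γ : ℝ := Real.Gamma (1-α) with hΓdef
  set F : ℕ → ℝ → ℝ :=
    fun n lam => ∑ i ∈ Finset.Icc 1 n, (1 - Real.exp (-(lam * a i))) with hFdef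
  have hterm : ∀ (lam : ℝ) (i : ℕ), 0 ≤ lam → Real.exp (-(lam * a i)) ≤ 1 := by
    intro lam i hlam
    rw [Real.exp_le_one_iff]
    nlinarith [ha i]
  have hFnonneg : ∀ (n : ℕ) (lam : ℝ), 0 ≤ lam → 0 ≤ F n lam := by
    intro n lam hlam
    apply Finset.sum_nonneg
    intro i _
    linarith [hterm lam i hlam]
  have hFn : ∀ (n n' : ℕ) (lam : ℝ), 0 ≤ lam → n ≤ n' → F n lam ≤ F n' lam := by
    intro n n' lam hlam hnn
    apply Finset.sum_le_sum_of_subset_of_nonneg (Finset.Icc_subset_Icc_right hnn)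
    intro i _ _
    linarith [hterm lam i hlam]
  have hFlam : ∀ (n : ℕ) (lam lam' : ℝ), 0 ≤ lam → lam ≤ lam' → F n lam ≤ F n lam' := by
    intro n lam lam' hlam hll
    apply Finset.sum_le_sum
    intro i _
    have h2 : Real.exp (-(lam' * a i)) ≤ Real.exp (-(lam * a i)) := by
      apply Real.exp_le_exp.mpr
      nlinarith [ha i]
    linarith
  -- rewrite the goal in terms of F
  have hrw : (fun n : ℕ => (n:ℝ) ^ (-(1-ν)) *
      ∑ i ∈ Finset.Icc 1 n, (1 - Real.exp (-(θ * a i / (n:ℝ) ^ (ν/α)))))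
      = fun n : ℕ => (n:ℝ) ^ (-(1-ν)) * F n (θ / (n:ℝ) ^ (ν/α)) := by
    funext n
    congr 1
    refine Finset.sum_congr rfl (fun i _ => ?_)
    rw [show θ * a i / (n:ℝ) ^ (ν/α) = θ / (n:ℝ) ^ (ν/α) * a i from by ring]
  rw [hrw]
  -- antitone coefficient
  have hanti : ∀ x y : ℝ, 0 < x → x ≤ y → y ^ (-(1-ν)) ≤ x ^ (-(1-ν)) := by
    intro x y hx hxy
    rw [Real.rpow_neg hx.le, Real.rpow_neg (le_trans hx.le hxy)]
    apply inv_anti₀ (Real.rpow_pos_of_pos hx _)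
    exact Real.rpow_le_rpow hx.le hxy (by linarith)
  -- floor facts
  have hfloor : ∀ n : ℕ, 1 ≤ n →
      ((⌊(n:ℝ) ^ ((m:ℝ)⁻¹)⌋₊)^m ≤ n ∧ n < (⌊(n:ℝ) ^ ((m:ℝ)⁻¹)⌋₊ + 1)^m) := by
    intro n hn
    set x : ℝ := (n:ℝ) ^ ((m:ℝ)⁻¹) with hxdef
    have hx0 : 0 ≤ x := Real.rpow_nonneg (Nat.cast_nonneg n) _
    have hxm : x ^ m = (n:ℝ) := by
      rw [hxdef, ← Real.rpow_natCast ((n:ℝ) ^ ((m:ℝ)⁻¹)) m, ← Real.rpow_mul (Nat.cast_nonneg n),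
        inv_mul_cancel₀ (by exact_mod_cast hm0 : (m:ℝ) ≠ 0), Real.rpow_one]
    constructor
    · have h1 : ((⌊x⌋₊:ℝ))^m ≤ x^m := pow_le_pow_left₀ (Nat.cast_nonneg _) (Nat.floor_le hx0) m
      rw [hxm] at h1
      exact_mod_cast h1
    · have h2 : x^m < ((⌊x⌋₊:ℝ)+1)^m := by
        apply pow_lt_pow_left₀ (Nat.lt_floor_add_one x) hx0 hm0
      rw [hxm] at h2
      exact_mod_cast h2
  have hfloor_ge : ∀ (K n : ℕ), (K+1)^m ≤ n → K+1 ≤ ⌊(n:ℝ) ^ ((m:ℝ)⁻¹)⌋₊ := by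
    intro K n hKn
    apply Nat.le_floor
    have h1 : (((K+1)^m : ℕ):ℝ) ≤ (n:ℝ) := Nat.cast_le.mpr hKn
    have h2 : (((K:ℝ)+1)^m : ℝ) ^ ((m:ℝ)⁻¹) ≤ (n:ℝ) ^ ((m:ℝ)⁻¹) := by
      apply Real.rpow_le_rpow (by positivity) _ (by positivity)
      · push_cast at h1 ⊢
        exact h1
    have h3 : (((K:ℝ)+1)^m : ℝ) ^ ((m:ℝ)⁻¹) = (K:ℝ)+1 := by
      rw [← Real.rpow_natCast ((K:ℝ)+1) m, ← Real.rpow_mul (by positivity),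
        mul_inv_cancel₀ (by exact_mod_cast hm0 : (m:ℝ) ≠ 0), Real.rpow_one]
    rw [h3] at h2
    exact_mod_cast h2
  -- continuity choice of p q
  rw [Metric.tendsto_atTop]
  intro ε hε
  have hcont : ContinuousAt (fun x : ℝ => Γ * x ^ α) θ :=
    continuousAt_const.mul (Real.continuousAt_rpow_const θ α (Or.inl hθ.ne'))
  rw [Metric.continuousAt_iff] at hcont
  obtain ⟨δ0, hδ0, hδ⟩ := hcont (ε/4) (by linarith)
  set δ : ℝ := min δ0 θ with hδdef
  have hδpos : 0 < δ := lt_min hδ0 hθ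
  have hδθ : δ ≤ θ := min_le_right _ _
  have hδδ0 : δ ≤ δ0 := min_le_left _ _
  obtain ⟨q, hq1, hq2⟩ := exists_rat_btwn (show θ < θ + δ/2 by linarith)
  obtain ⟨p, hp1, hp2⟩ := exists_rat_btwn (show θ - δ/2 < θ by linarith)
  have hqθ : θ < (q:ℝ) := hq1
  have hpθ : (p:ℝ) < θ := hp2
  have hp0 : 0 < (p:ℝ) := by linarith
  have hq0 : 0 < (q:ℝ) := lt_trans hθ hq1
  have hqγ : Γ * (q:ℝ)^α < Γ * θ^α + ε/4 := by
    have h1 : dist (q:ℝ) θ < δ0 := by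
      rw [Real.dist_eq, abs_of_pos (by linarith)]
      linarith
    have := hδ h1
    rw [Real.dist_eq] at this
    have h2 := abs_lt.mp this
    linarith [h2.1, h2.2]
  have hpγ : Γ * θ^α - ε/4 < Γ * (p:ℝ)^α := by
    have h1 : dist (p:ℝ) θ < δ0 := by
      rw [Real.dist_eq, abs_of_neg (by linarith)]
      linarith
    have := hδ h1
    rw [Real.dist_eq] at this
    have h2 := abs_lt.mp this
    linarith [h2.1, h2.2]
  -- the ratio sequence
  set ρ : ℕ → ℝ := fun k => ((k^m : ℕ):ℝ) / (((k+1)^m : ℕ):ℝ) with hρdef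
  have hρcast : ∀ k : ℕ, ρ k = ((k:ℝ)/((k:ℝ)+1))^m := by
    intro k
    rw [hρdef]
    push_cast
    rw [div_pow]
  have hρlim : Tendsto ρ atTop (nhds 1) := by
    have h1 : Tendsto (fun k : ℕ => (k:ℝ)/((k:ℝ)+1)) atTop (nhds 1) := by
      have := tendsto_natCast_div_add_atTop (𝕜 := ℝ) 1
      exact this
    have h2 := h1.pow m
    rw [one_pow] at h2
    exact h2.congr (fun k => (hρcast k).symm)
  have hρnn : ∀ k : ℕ, 0 ≤ ρ k := by
    intro k
    apply div_nonneg (Nat.cast_nonneg _) (Nat.cast_nonneg _)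
  -- eventual statements
  have hρνα : Tendsto (fun k => (ρ k) ^ (ν/α)) atTop (nhds 1) := by
    have hcont1 : ContinuousAt (fun x : ℝ => x ^ (ν/α)) 1 :=
      Real.continuousAt_rpow_const 1 _ (Or.inl one_ne_zero)
    have := hcont1.tendsto.comp hρlim
    rw [Real.one_rpow] at this
    exact this
  have hρ1ν : Tendsto (fun k => (ρ k) ^ ((1:ℝ)-ν)) atTop (nhds 1) := by
    have hcont1 : ContinuousAt (fun x : ℝ => x ^ ((1:ℝ)-ν)) 1 :=
      Real.continuousAt_rpow_const 1 _ (Or.inl one_ne_zero)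
    have := hcont1.tendsto.comp hρlim
    rw [Real.one_rpow] at this
    exact this
  have hEν : ∀ᶠ k in atTop, θ/(q:ℝ) < (ρ k) ^ (ν/α) ∧ (p:ℝ)/θ < (ρ k) ^ (ν/α) := by
    have h1 : θ/(q:ℝ) < 1 := (div_lt_one hq0).mpr hqθ
    have h2 : (p:ℝ)/θ < 1 := (div_lt_one hθ).mpr hpθ
    exact (hρνα.eventually_const_lt h1).and (hρνα.eventually_const_lt h2)
  -- upper and lower comparison sequences
  set Uq : ℕ → ℝ := fun k => ((((k+1)^m : ℕ)):ℝ) ^ (-(1-ν)) *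
      F ((k+1)^m) ((q:ℝ) / ((((k+1)^m : ℕ)):ℝ) ^ (ν/α)) with hUqdef
  set Lp : ℕ → ℝ := fun k => ((((k+1)^m : ℕ)):ℝ) ^ (-(1-ν)) *
      F ((k+1)^m) ((p:ℝ) / ((((k+1)^m : ℕ)):ℝ) ^ (ν/α)) with hLpdef
  have hUq : Tendsto Uq atTop (nhds (Γ * (q:ℝ)^α)) := H q hq0
  have hLp : Tendsto Lp atTop (nhds (Γ * (p:ℝ)^α)) := H p hp0
  have hU : Tendsto (fun k => Uq k / (ρ k) ^ ((1:ℝ)-ν)) atTop (nhds (Γ * (q:ℝ)^α)) := by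
    have := hUq.div hρ1ν one_ne_zero
    rw [div_one] at this
    exact this
  have hL : Tendsto (fun k => Lp (k-1) * (ρ k) ^ ((1:ℝ)-ν)) atTop (nhds (Γ * (p:ℝ)^α)) := by
    have h1 := hLp.comp (tendsto_sub_atTop_nat 1)
    have := h1.mul hρ1ν
    simpa using this
  have hEup : ∀ᶠ k in atTop, Uq k / (ρ k) ^ ((1:ℝ)-ν) < Γ * θ^α + ε/2 :=
    hU.eventually_lt_const (by linarith)
  have hElo : ∀ᶠ k in atTop, Γ * θ^α - ε/2 < Lp (k-1) * (ρ k) ^ ((1:ℝ)-ν) :=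
    hL.eventually_const_lt (by linarith)
  obtain ⟨K, hK⟩ := eventually_atTop.mp ((hEup.and hElo).and hEν)
  refine ⟨(max K 1 + 1)^m, fun n hn => ?_⟩
  -- setup indices
  set k : ℕ := ⌊(n:ℝ) ^ ((m:ℝ)⁻¹)⌋₊ with hkdef
  have hn1 : 1 ≤ n := le_trans (Nat.one_le_pow _ _ (by positivity)) hn
  obtain ⟨hk1, hk2⟩ := hfloor n hn1
  have hkK : max K 1 + 1 ≤ k := hfloor_ge _ _ hn
  have hkge : K ≤ k := by
    have := le_max_left K 1
    omega
  have hk1' : 1 ≤ k := by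
    have := le_max_right K 1
    omega
  obtain ⟨⟨hup, hlo⟩, hcmp⟩ := hK k hkge
  -- positivity
  have hn1pos : (0:ℝ) < ((k^m : ℕ):ℝ) := by
    have : 0 < k^m := by positivity
    exact_mod_cast this
  have hn2pos : (0:ℝ) < (((k+1)^m : ℕ):ℝ) := by
    have : 0 < (k+1)^m := by positivity
    exact_mod_cast this
  have hnpos : (0:ℝ) < (n:ℝ) := by exact_mod_cast hn1
  have c1 : ((k^m : ℕ):ℝ) ≤ (n:ℝ) := Nat.cast_le.mpr hk1
  have c2 : (n:ℝ) ≤ (((k+1)^m : ℕ):ℝ) := Nat.cast_le.mpr hk2.le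
  have hραid : (ρ k) ^ (ν/α) = ((k^m : ℕ):ℝ) ^ (ν/α) / (((k+1)^m : ℕ):ℝ) ^ (ν/α) := by
    rw [hρdef]
    exact Real.div_rpow hn1pos.le hn2pos.le _
  have hrpowpos : ∀ (x : ℝ), 0 < x → (0:ℝ) < x ^ (ν/α) := fun x hx => Real.rpow_pos_of_pos hx _
  -- lambda comparisons
  have hlam_up : θ / (n:ℝ) ^ (ν/α) ≤ (q:ℝ) / (((k+1)^m : ℕ):ℝ) ^ (ν/α) := by
    have h1 : θ / (n:ℝ) ^ (ν/α) ≤ θ / ((k^m : ℕ):ℝ) ^ (ν/α) := by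
      apply div_le_div_of_nonneg_left hθ.le (hrpowpos _ hn1pos)
      exact Real.rpow_le_rpow hn1pos.le c1 (by positivity)
    refine le_trans h1 ?_
    rw [div_le_div_iff₀ (hrpowpos _ hn1pos) (hrpowpos _ hn2pos)]
    have h2 := hcmp.1
    rw [hραid, div_lt_div_iff₀ hq0 (hrpowpos _ hn2pos)] at h2
    linarith
  have hlam_lo : (p:ℝ) / ((k^m : ℕ):ℝ) ^ (ν/α) ≤ θ / (n:ℝ) ^ (ν/α) := by
    have h1 : θ / (((k+1)^m : ℕ):ℝ) ^ (ν/α) ≤ θ / (n:ℝ) ^ (ν/α) := by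
      apply div_le_div_of_nonneg_left hθ.le (hrpowpos _ hnpos)
      exact Real.rpow_le_rpow hnpos.le c2 (by positivity)
    refine le_trans ?_ h1
    rw [div_le_div_iff₀ (hrpowpos _ hn1pos) (hrpowpos _ hn2pos)]
    have h2 := hcmp.2
    rw [hραid, div_lt_div_iff₀ hθ (hrpowpos _ hn2pos)] at h2
    linarith
  -- nonnegativity of the lambdas involved
  have hlamn_nn : 0 ≤ θ / (n:ℝ) ^ (ν/α) := by positivity
  have hlamq_nn : 0 ≤ (q:ℝ) / (((k+1)^m : ℕ):ℝ) ^ (ν/α) := by positivity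
  have hlamp_nn : 0 ≤ (p:ℝ) / ((k^m : ℕ):ℝ) ^ (ν/α) := by positivity
  -- nonzero rpow facts
  have hz1 : ((k^m : ℕ):ℝ) ^ ((1:ℝ)-ν) ≠ 0 := (Real.rpow_pos_of_pos hn1pos _).ne'
  have hz2 : (((k+1)^m : ℕ):ℝ) ^ ((1:ℝ)-ν) ≠ 0 := (Real.rpow_pos_of_pos hn2pos _).ne'
  -- identities
  have hρ1νid : (ρ k) ^ ((1:ℝ)-ν)
      = ((k^m : ℕ):ℝ) ^ ((1:ℝ)-ν) / (((k+1)^m : ℕ):ℝ) ^ ((1:ℝ)-ν) := by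
    rw [hρdef]
    exact Real.div_rpow hn1pos.le hn2pos.le _
  have hidU : ((k^m : ℕ):ℝ) ^ (-(1-ν))
      = (((k+1)^m : ℕ):ℝ) ^ (-(1-ν)) / (ρ k) ^ ((1:ℝ)-ν) := by
    rw [hρ1νid, Real.rpow_neg hn1pos.le, Real.rpow_neg hn2pos.le]
    field_simp
  have hidL : (((k+1)^m : ℕ):ℝ) ^ (-(1-ν))
      = ((k^m : ℕ):ℝ) ^ (-(1-ν)) * (ρ k) ^ ((1:ℝ)-ν) := by
    rw [hρ1νid, Real.rpow_neg hn1pos.le, Real.rpow_neg hn2pos.le]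
    field_simp
  have hk1'' : k - 1 + 1 = k := Nat.succ_pred_eq_of_pos hk1'
  have hLpk : Lp (k-1) = ((k^m : ℕ):ℝ) ^ (-(1-ν)) *
      F (k^m) ((p:ℝ) / ((k^m : ℕ):ℝ) ^ (ν/α)) := by
    rw [hLpdef]
    simp only
    rw [hk1'']
  -- upper bound
  have hupper : (n:ℝ) ^ (-(1-ν)) * F n (θ / (n:ℝ) ^ (ν/α)) < Γ * θ^α + ε/2 := by
    have hF1 : F n (θ / (n:ℝ) ^ (ν/α))
        ≤ F ((k+1)^m) ((q:ℝ) / (((k+1)^m : ℕ):ℝ) ^ (ν/α)) :=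
      le_trans (hFlam n _ _ hlamn_nn hlam_up) (hFn n ((k+1)^m) _ hlamq_nn hk2.le)
    have hco : (n:ℝ) ^ (-(1-ν)) ≤ ((k^m : ℕ):ℝ) ^ (-(1-ν)) := hanti _ _ hn1pos c1
    have h3 : (n:ℝ) ^ (-(1-ν)) * F n (θ / (n:ℝ) ^ (ν/α))
        ≤ ((k^m : ℕ):ℝ) ^ (-(1-ν)) *
          F ((k+1)^m) ((q:ℝ) / (((k+1)^m : ℕ):ℝ) ^ (ν/α)) := by
      apply mul_le_mul hco hF1 (hFnonneg _ _ hlamn_nn)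
      exact (Real.rpow_pos_of_pos hn1pos _).le
    refine lt_of_le_of_lt h3 ?_
    have h4 : ((k^m : ℕ):ℝ) ^ (-(1-ν)) *
        F ((k+1)^m) ((q:ℝ) / (((k+1)^m : ℕ):ℝ) ^ (ν/α)) = Uq k / (ρ k) ^ ((1:ℝ)-ν) := by
      rw [hidU, hUqdef]
      ring
    rw [h4]
    exact hup
  -- lower bound
  have hlower : Γ * θ^α - ε/2 < (n:ℝ) ^ (-(1-ν)) * F n (θ / (n:ℝ) ^ (ν/α)) := by
    have hF1 : F (k^m) ((p:ℝ) / ((k^m : ℕ):ℝ) ^ (ν/α)) ≤ F n (θ / (n:ℝ) ^ (ν/α)) :=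
      le_trans (hFlam (k^m) _ _ hlamp_nn hlam_lo) (hFn (k^m) n _ hlamn_nn hk1)
    have hco : (((k+1)^m : ℕ):ℝ) ^ (-(1-ν)) ≤ (n:ℝ) ^ (-(1-ν)) := hanti _ _ hnpos c2
    have h3 : (((k+1)^m : ℕ):ℝ) ^ (-(1-ν)) * F (k^m) ((p:ℝ) / ((k^m : ℕ):ℝ) ^ (ν/α))
        ≤ (n:ℝ) ^ (-(1-ν)) * F n (θ / (n:ℝ) ^ (ν/α)) := by
      apply mul_le_mul hco hF1 (hFnonneg _ _ hlamp_nn)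
      exact (Real.rpow_nonneg hnpos.le _)
    refine lt_of_lt_of_le ?_ h3
    have h4 : (((k+1)^m : ℕ):ℝ) ^ (-(1-ν)) * F (k^m) ((p:ℝ) / ((k^m : ℕ):ℝ) ^ (ν/α))
        = Lp (k-1) * (ρ k) ^ ((1:ℝ)-ν) := by
      rw [hLpk, hidL]
      ring
    rw [h4]
    exact hlo
  rw [Real.dist_eq, abs_lt]
  constructor <;> [linarith; linarith]


/-- Almost surely, for every `θ > 0`,
`n^{−(1−ν)} ∑_{i=1}^n (1 − e^{−θτ_i/n^{ν/α}}) → Γ(1−α) θ^α` as `n → ∞`. -/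
theorem laplace_exponent_tendsto_stable
    {Ω : Type*} [MeasureSpace Ω] [IsProbabilityMeasure (ℙ : Measure Ω)]
    (α : ℝ) (hα : α ∈ Set.Ioo (0 : ℝ) 1) (ν : ℝ) (hν : ν ∈ Set.Ioo (0 : ℝ) 1)
    (τ : Ω → ℝ) (hτmeas : Measurable τ) (hτnn : ∀ ω, 0 ≤ τ ω)
    (Lf : ℝ → ℝ) (hLf : Filter.Tendsto Lf Filter.atTop (nhds 1))
    (htail : ∀ t : ℝ, 0 < t → ℙ {ω | t < τ ω} = ENNReal.ofReal (Lf t / t ^ α))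
    (τs : ℕ → Ω → ℝ) (hτsmeas : ∀ i, Measurable (τs i))
    (hiid : iIndepFun τs ℙ)
    (hident : ∀ i, IdentDistrib (τs i) τ ℙ ℙ)
    :
    ∀ᵐ ω ∂ℙ, ∀ θ : ℝ, 0 < θ →
      Filter.Tendsto
        (fun n : ℕ =>
          (n : ℝ) ^ (-(1 - ν)) *
            ∑ i ∈ Finset.Icc 1 n, (1 - Real.exp (-(θ * τs i ω / (n : ℝ) ^ (ν / α)))))
        Filter.atTop (nhds (Real.Gamma (1 - α) * θ ^ α)) := by
  obtain ⟨hα0, hα1⟩ := hα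
  obtain ⟨hν0, hν1⟩ := hν
  have hν1' : (0:ℝ) < 1 - ν := by linarith
  set m : ℕ := ⌈(2:ℝ)/(1-ν)⌉₊ with hmdef
  have hm : 1 < (m:ℝ) * (1-ν) := by
    have h1 : (2:ℝ)/(1-ν) ≤ (m:ℝ) := Nat.le_ceil _
    rw [div_le_iff₀ hν1'] at h1
    linarith
  have hm0 : m ≠ 0 := by
    intro h
    rw [h] at hm
    norm_num at hm
  have hτsnn : ∀ᵐ ω ∂ℙ, ∀ i, 0 ≤ τs i ω := by
    rw [ae_all_iff]
    intro i
    have hset : ℙ {ω | τs i ω < 0} = 0 := by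
      have h1 : ℙ {ω | τs i ω < 0} = Measure.map (τs i) ℙ (Set.Iio 0) := by
        rw [Measure.map_apply (hτsmeas i) measurableSet_Iio]
        rfl
      rw [h1, (hident i).map_eq, Measure.map_apply hτmeas measurableSet_Iio]
      have h2 : τ ⁻¹' (Set.Iio 0) = ∅ := by
        ext ω
        simp only [Set.mem_preimage, Set.mem_Iio, Set.mem_empty_iff_false, iff_false, not_lt]
        exact hτnn ω
      rw [h2]
      simp
    rw [ae_iff]
    convert hset using 2
    ext ω
    simp
  have hQS : ∀ᵐ ω ∂ℙ, ∀ q : ℚ, 0 < (q:ℝ) → Tendsto (fun k : ℕ =>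
        ((((k+1)^m : ℕ)):ℝ) ^ (-(1-ν)) * ∑ i ∈ Finset.Icc 1 ((k+1)^m),
          (1 - Real.exp (-((q:ℝ) / ((((k+1)^m : ℕ)):ℝ) ^ (ν/α) * τs i ω))))
      atTop (nhds (Real.Gamma (1-α) * (q:ℝ) ^ α)) := by
    rw [ae_all_iff]
    intro q
    by_cases hq : 0 < (q:ℝ)
    · exact (aux_subseq hα0 hα1 hν0 hν1 hτmeas hτnn hLf htail hτsmeas hiid hident hm hq).mono
        (fun ω h _ => h)
    · exact ae_of_all _ (fun ω h => absurd h hq)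
  filter_upwards [hτsnn, hQS] with ω h1 h2
  intro θ hθ
  exact aux_sandwich hα0 hα1 hν0 hν1 hm0 (a := fun i => τs i ω) h1 (fun q hq => h2 q hq) hθ
end

section
/- For every ℓ ≥ 1 and all Borel sets B_1, …, B_{2ℓ} ⊆ ℝ, P(X_{U_1} ∈ B_1, …, X_{U_ℓ} ∈ B_ℓ, X_1 ∈ B_{ℓ+1}, …, X_ℓ ∈ B_{2ℓ}) → Π_{i=1}^{2ℓ} P(X ∈ B_i) as M → ∞. -/
open MeasureTheory ProbabilityTheory

open Filter in
open scoped NNReal ENNReal in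
lemma aux_card_resample (ℓ M : ℕ) :
    ((Fintype.piFinset (fun _ : Fin ℓ => Finset.Icc 1 M)).filter
      (fun u => Function.Injective u ∧ ∀ k, ℓ < u k)).card = (M - ℓ).descFactorial ℓ := by
  rw [← Fintype.card_coe]
  have e : {u // u ∈ ((Fintype.piFinset (fun _ : Fin ℓ => Finset.Icc 1 M)).filter
      (fun u => Function.Injective u ∧ ∀ k, ℓ < u k))} ≃ (Fin ℓ ↪ (Finset.Icc (ℓ+1) M)) := by
    refine
      { toFun := fun u => ⟨fun k => ⟨u.1 k, ?_⟩, ?_⟩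
        invFun := fun e => ⟨fun k => (e k : ℕ), ?_⟩
        left_inv := ?_, right_inv := ?_ }
    · obtain ⟨hu1, hu2, hu3⟩ := Finset.mem_filter.1 u.2
      have := Fintype.mem_piFinset.1 hu1 k
      simp only [Finset.mem_Icc] at this ⊢
      exact ⟨hu3 k, this.2⟩
    · intro a b hab
      obtain ⟨hu1, hu2, hu3⟩ := Finset.mem_filter.1 u.2
      exact hu2 (congrArg Subtype.val hab)
    · refine Finset.mem_filter.2 ⟨Fintype.mem_piFinset.2 fun k => ?_, fun a b hab => ?_, fun k => ?_⟩
      · have := (e k).2; simp only [Finset.mem_Icc] at this ⊢; omega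
      · exact e.injective (Subtype.ext hab)
      · show ℓ < (e k : ℕ)
        have := (e k).2; simp only [Finset.mem_Icc] at this; omega
    · intro u; ext k; rfl
    · intro e; ext k; rfl
  rw [Fintype.card_congr e, Fintype.card_embedding_eq, Fintype.card_coe, Fintype.card_fin,
    Nat.card_Icc]
  congr 1
  omega

open Filter in
open scoped NNReal ENNReal in
lemma aux_ratio_resample (ℓ : ℕ) :
    Tendsto (fun M : ℕ => (((M - ℓ).descFactorial ℓ : ENNReal) * ((M : ENNReal)⁻¹)^ℓ))
      atTop (nhds 1) := by
  have hreal : Tendsto (fun M : ℕ => (((M - ℓ).descFactorial ℓ : ℝ) * ((M : ℝ)⁻¹)^ℓ))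
      atTop (nhds 1) := by
    have h2 : ∀ i ∈ Finset.range ℓ,
        Tendsto (fun M : ℕ => (1 : ℝ) - ((ℓ + i : ℕ) : ℝ) / M) atTop (nhds 1) := by
      intro i _
      have : Tendsto (fun M : ℕ => ((ℓ + i : ℕ) : ℝ) / M) atTop (nhds 0) :=
        tendsto_const_div_atTop_nhds_zero_nat _
      simpa using (tendsto_const_nhds (x := (1:ℝ))).sub this
    have h1 := tendsto_finset_prod (Finset.range ℓ) h2
    simp only [Finset.prod_const_one] at h1
    refine h1.congr' ?_
    filter_upwards [eventually_ge_atTop (2 * ℓ + 1)] with M hM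
    have hM0 : (M : ℝ) ≠ 0 := Nat.cast_ne_zero.2 (by omega)
    rw [Nat.descFactorial_eq_prod_range, Nat.cast_prod,
      show ((M:ℝ)⁻¹)^ℓ = ∏ _i ∈ Finset.range ℓ, (M:ℝ)⁻¹ by
        rw [Finset.prod_const, Finset.card_range],
      ← Finset.prod_mul_distrib]
    refine Finset.prod_congr rfl fun i hi => ?_
    have hi' : i < ℓ := Finset.mem_range.1 hi
    rw [show (M - ℓ - i : ℕ) = M - (ℓ + i) from by omega, Nat.cast_sub (by omega)]
    push_cast
    field_simp
  have hnn : Tendsto (fun M : ℕ => (((M - ℓ).descFactorial ℓ : ℝ≥0) * ((M : ℝ≥0)⁻¹)^ℓ))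
      atTop (nhds 1) := by
    rw [← NNReal.tendsto_coe]
    convert hreal using 2 with M
    all_goals simp
  have := (ENNReal.tendsto_coe (f := atTop)
    (m := fun M : ℕ => (((M - ℓ).descFactorial ℓ : ℝ≥0) * ((M : ℝ≥0)⁻¹)^ℓ)) (a := 1)).2 hnn
  rw [ENNReal.coe_one] at this
  refine this.congr' ?_
  filter_upwards [eventually_ge_atTop 1] with M hM
  have hM0 : (M : ℝ≥0) ≠ 0 := Nat.cast_ne_zero.2 (by omega)
  push_cast [ENNReal.coe_inv hM0]
  ring

/-- For every `ℓ ≥ 1` and Borel sets `B_1, …, B_ℓ, B'_1, …, B'_ℓ ⊆ ℝ`,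
`P(X_{U_1} ∈ B_1, …, X_{U_ℓ} ∈ B_ℓ, X_1 ∈ B'_1, …, X_ℓ ∈ B'_ℓ) → ∏ᵢ P(X ∈ Bᵢ) ∏ᵢ P(X ∈ B'ᵢ)`
as `M → ∞`. -/
theorem prob_resampled_and_initial_tendsto_prod
    {Ω : Type*} [MeasureSpace Ω] [IsProbabilityMeasure (ℙ : Measure Ω)]
    (X : Ω → ℝ) (hXmeas : Measurable X)
    (Xs : ℕ → Ω → ℝ) (hXsmeas : ∀ i, Measurable (Xs i))
    -- the `X_i` are i.i.d. copies of `X`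
    (hXiid : iIndepFun Xs ℙ)
    (hXident : ∀ i, IdentDistrib (Xs i) X ℙ ℙ)
    (U : ℕ → ℕ → Ω → ℕ) (hUmeas : ∀ M i, Measurable (U M i))
    -- for each `M ≥ 1`, the `U M i` are uniformly distributed on `{1, …, M}`
    (hUunif : ∀ M : ℕ, 1 ≤ M → ∀ i, ∀ j ∈ Finset.Icc 1 M,
      ℙ {ω | U M i ω = j} = (M : ENNReal)⁻¹)
    (hUrange : ∀ M : ℕ, 1 ≤ M → ∀ i, ∀ᵐ ω ∂ℙ, U M i ω ∈ Finset.Icc 1 M)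
    -- for each `M`, the `U M i` are independent among themselves …
    (hUiid : ∀ M, iIndepFun (U M) ℙ)
    -- … and the whole family `(U M i)_i` is independent of the whole family `(X_i)_i`
    (hUX : ∀ M, IndepFun (fun ω (i : ℕ) => U M i ω) (fun ω (i : ℕ) => Xs i ω) ℙ)
    (ℓ : ℕ) (hℓ : 1 ≤ ℓ)
    (Bu Bx : ℕ → Set ℝ)
    (hBu : ∀ i, MeasurableSet (Bu i)) (hBx : ∀ i, MeasurableSet (Bx i)) :
    Filter.Tendsto
      (fun M : ℕ =>
        ℙ {ω | (∀ i ∈ Finset.Icc 1 ℓ, Xs (U M i ω) ω ∈ Bu i)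
             ∧ (∀ i ∈ Finset.Icc 1 ℓ, Xs i ω ∈ Bx i)})
      Filter.atTop
      (nhds ((∏ i ∈ Finset.Icc 1 ℓ, ℙ {ω | X ω ∈ Bu i}) *
             (∏ i ∈ Finset.Icc 1 ℓ, ℙ {ω | X ω ∈ Bx i}))) := by
  classical
  haveI : Nonempty (Fin ℓ) := ⟨⟨0, hℓ⟩⟩
  set P : ENNReal := (∏ i ∈ Finset.Icc 1 ℓ, ℙ {ω | X ω ∈ Bu i}) *
      (∏ i ∈ Finset.Icc 1 ℓ, ℙ {ω | X ω ∈ Bx i}) with hP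
  set A : ℕ → Set Ω := fun M => {ω | (∀ i ∈ Finset.Icc 1 ℓ, Xs (U M i ω) ω ∈ Bu i)
      ∧ (∀ i ∈ Finset.Icc 1 ℓ, Xs i ω ∈ Bx i)} with hA
  set E : (Fin ℓ → ℕ) → Set Ω := fun u =>
      (⋂ k : Fin ℓ, Xs (u k) ⁻¹' Bu ((k : ℕ) + 1)) ∩
      (⋂ i ∈ Finset.Icc 1 ℓ, Xs i ⁻¹' Bx i) with hE
  set C : ℕ → (Fin ℓ → ℕ) → Set Ω :=
      fun M u => ⋂ k : Fin ℓ, U M ((k : ℕ) + 1) ⁻¹' {u k} with hC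
  set S : ℕ → Finset (Fin ℓ → ℕ) :=
      fun M => Fintype.piFinset (fun _ => Finset.Icc 1 M) with hS
  set G : ℕ → Finset (Fin ℓ → ℕ) := fun M =>
      (S M).filter (fun u => Function.Injective u ∧ ∀ k, ℓ < u k) with hG
  set c : ℕ → ENNReal := fun M => ((G M).card : ENNReal) * ((M : ENNReal)⁻¹)^ℓ with hc
  -- membership in `Icc 1 ℓ` via `Fin ℓ`
  have hIcc : ∀ i : ℕ, i ∈ Finset.Icc 1 ℓ ↔ ∃ k : Fin ℓ, (k : ℕ) + 1 = i := by
    intro i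
    rw [Finset.mem_Icc]
    constructor
    · rintro ⟨h1, h2⟩
      exact ⟨⟨i - 1, by omega⟩, by show i - 1 + 1 = i; omega⟩
    · rintro ⟨k, rfl⟩
      exact ⟨by omega, k.2⟩
  have hprodIcc : ∀ h : ℕ → ENNReal,
      (∏ k : Fin ℓ, h ((k : ℕ) + 1)) = ∏ i ∈ Finset.Icc 1 ℓ, h i := by
    intro h
    rw [Fin.prod_univ_eq_prod_range (fun k => h (k + 1)) ℓ,
      show Finset.Icc 1 ℓ = (Finset.range ℓ).image (· + 1) by
        ext i
        simp only [Finset.mem_Icc, Finset.mem_image, Finset.mem_range]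
        constructor
        · rintro ⟨h1, h2⟩; exact ⟨i - 1, by omega, by omega⟩
        · rintro ⟨a, ha, rfl⟩; omega,
      Finset.prod_image (fun a _ b _ hab => by omega)]
  have hmemC : ∀ M u ω, ω ∈ C M u ↔ ∀ k : Fin ℓ, U M ((k : ℕ) + 1) ω = u k := by
    intro M u ω
    simp [hC, Set.mem_iInter]
  have hmemE : ∀ u ω, ω ∈ E u ↔
      ((∀ k : Fin ℓ, Xs (u k) ω ∈ Bu ((k : ℕ) + 1)) ∧
       ∀ i ∈ Finset.Icc 1 ℓ, Xs i ω ∈ Bx i) := by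
    intro u ω
    simp [hE, Set.mem_iInter]
  have hEmeas : ∀ u, MeasurableSet (E u) := fun u =>
    (MeasurableSet.iInter fun k => hXsmeas _ (hBu _)).inter
      (MeasurableSet.biInter (Set.to_countable _) fun i _ => hXsmeas _ (hBx _))
  have hCmeas : ∀ M u, MeasurableSet (C M u) :=
    fun M u => MeasurableSet.iInter fun k => hUmeas M _ (measurableSet_singleton _)
  have hCdisj : ∀ M, ∀ u v : Fin ℓ → ℕ, u ≠ v → Disjoint (C M u) (C M v) := by
    intro M u v huv
    rw [Set.disjoint_left]
    intro ω hu hv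
    apply huv
    funext k
    exact ((hmemC M u ω).1 hu k).symm.trans ((hmemC M v ω).1 hv k)
  -- probability of `C M u`
  have hCprob : ∀ M, 1 ≤ M → ∀ u ∈ S M, ℙ (C M u) = ((M : ENNReal)⁻¹)^ℓ := by
    intro M hM u hu
    set w : ℕ → ℕ := fun i => if h : i - 1 < ℓ ∧ 1 ≤ i then u ⟨i - 1, h.1⟩ else 0 with hw
    have hwk : ∀ k : Fin ℓ, w ((k : ℕ) + 1) = u k := by
      intro k
      have hk : ((k : ℕ) + 1) - 1 < ℓ ∧ 1 ≤ (k : ℕ) + 1 := ⟨by simpa using k.2, by omega⟩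
      rw [hw]
      simp only [dif_pos hk]
      rfl
    have hCw : C M u = ⋂ i ∈ Finset.Icc 1 ℓ, U M i ⁻¹' {w i} := by
      ext ω
      simp only [Set.mem_iInter, Set.mem_preimage, Set.mem_singleton_iff]
      rw [show (ω ∈ C M u) ↔ _ from hmemC M u ω]
      constructor
      · intro h i hi
        obtain ⟨k, rfl⟩ := (hIcc i).1 hi
        rw [hwk]
        exact h k
      · intro h k
        rw [← hwk k]
        exact h _ ((hIcc _).2 ⟨k, rfl⟩)
    rw [hCw, (hUiid M).measure_inter_preimage_eq_mul (Finset.Icc 1 ℓ)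
      (sets := fun i => {w i}) (fun i _ => measurableSet_singleton _)]
    have hterm : ∀ i ∈ Finset.Icc 1 ℓ, ℙ (U M i ⁻¹' {w i}) = (M : ENNReal)⁻¹ := by
      intro i hi
      have hwmem : w i ∈ Finset.Icc 1 M := by
        obtain ⟨k, rfl⟩ := (hIcc i).1 hi
        rw [hwk]
        exact Fintype.mem_piFinset.1 hu k
      have h := hUunif M hM i (w i) hwmem
      rw [show U M i ⁻¹' {w i} = {ω | U M i ω = w i} by ext ω; simp]
      exact h
    rw [Finset.prod_congr rfl hterm, Finset.prod_const, Nat.card_Icc,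
      show ℓ + 1 - 1 = ℓ from by omega]
  -- independence of the `E` and `C` parts
  have hECindep : ∀ M u, ℙ (E u ∩ C M u) = ℙ (E u) * ℙ (C M u) := by
    intro M u
    have hEpre : E u = (fun ω (i : ℕ) => Xs i ω) ⁻¹'
        ((⋂ k : Fin ℓ, (fun x : ℕ → ℝ => x (u k)) ⁻¹' Bu ((k : ℕ) + 1)) ∩
         (⋂ i ∈ Finset.Icc 1 ℓ, (fun x : ℕ → ℝ => x i) ⁻¹' Bx i)) := by
      ext ω
      rw [show (ω ∈ E u) ↔ _ from hmemE u ω]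
      simp [Set.mem_iInter]
    have hCpre : C M u = (fun ω (i : ℕ) => U M i ω) ⁻¹'
        (⋂ k : Fin ℓ, (fun v : ℕ → ℕ => v ((k : ℕ) + 1)) ⁻¹' {u k}) := by
      ext ω
      rw [show (ω ∈ C M u) ↔ _ from hmemC M u ω]
      simp [Set.mem_iInter]
    have hsU : MeasurableSet (⋂ k : Fin ℓ, (fun v : ℕ → ℕ => v ((k : ℕ) + 1)) ⁻¹' {u k}) := by
      refine MeasurableSet.iInter fun k => ?_
      exact measurable_pi_apply _ (measurableSet_singleton _)
    have hsX : MeasurableSet ((⋂ k : Fin ℓ, (fun x : ℕ → ℝ => x (u k)) ⁻¹' Bu ((k : ℕ) + 1)) ∩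
        (⋂ i ∈ Finset.Icc 1 ℓ, (fun x : ℕ → ℝ => x i) ⁻¹' Bx i)) := by
      refine MeasurableSet.inter ?_ ?_
      · refine MeasurableSet.iInter fun k => ?_
        exact measurable_pi_apply _ (hBu _)
      · refine MeasurableSet.biInter (Set.to_countable _) fun i _ => ?_
        exact measurable_pi_apply _ (hBx _)
    rw [hEpre, hCpre, Set.inter_comm,
      (hUX M).measure_inter_preimage_eq_mul _ _ hsU hsX, mul_comm]
  -- probability of `E u` for good `u`
  have hEgood : ∀ u : Fin ℓ → ℕ, Function.Injective u → (∀ k, ℓ < u k) → ℙ (E u) = P := by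
    intro u hinj hgt
    set sets : ℕ → Set ℝ :=
      fun i => if i ≤ ℓ then Bx i else Bu ((Function.invFun u i).val + 1) with hsets
    set t : Finset ℕ := Finset.Icc 1 ℓ ∪ Finset.image u Finset.univ with ht
    have hdisj : Disjoint (Finset.Icc 1 ℓ) (Finset.image u Finset.univ) := by
      rw [Finset.disjoint_left]
      intro i hi hmem
      obtain ⟨k, _, rfl⟩ := Finset.mem_image.1 hmem
      have h1 := hgt k
      have h2 := Finset.mem_Icc.1 hi
      omega
    have hinv : ∀ k : Fin ℓ, Function.invFun u (u k) = k :=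
      fun k => Function.leftInverse_invFun hinj k
    have hEt : E u = ⋂ i ∈ t, Xs i ⁻¹' sets i := by
      ext ω
      rw [show (ω ∈ E u) ↔ _ from hmemE u ω]
      simp only [ht, Set.mem_iInter, Set.mem_preimage, Finset.mem_union, Finset.mem_image,
        Finset.mem_univ, true_and]
      constructor
      · rintro ⟨h1, h2⟩ i hi
        rcases hi with hi | ⟨k, rfl⟩
        · rw [hsets]
          simp only [if_pos (Finset.mem_Icc.1 hi).2]
          exact h2 i hi
        · rw [hsets]
          simp only [if_neg (by have := hgt k; omega : ¬ u k ≤ ℓ), hinv k]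
          exact h1 k
      · intro h
        constructor
        · intro k
          have h3 := h (u k) (Or.inr ⟨k, rfl⟩)
          simp only [hsets, if_neg (by have := hgt k; omega : ¬ u k ≤ ℓ), hinv k] at h3
          exact h3
        · intro i hi
          have h3 := h i (Or.inl hi)
          simp only [hsets, if_pos (Finset.mem_Icc.1 hi).2] at h3
          exact h3
    have hsetsmeas : ∀ i ∈ t, MeasurableSet (sets i) := by
      intro i _
      rw [hsets]
      dsimp only
      split_ifs with h
      · exact hBx i
      · exact hBu _
    rw [hEt, hXiid.measure_inter_preimage_eq_mul t (sets := sets) hsetsmeas,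
      Finset.prod_union hdisj, Finset.prod_image (fun a _ b _ h => hinj h)]
    have hbx : ∀ i ∈ Finset.Icc 1 ℓ, ℙ (Xs i ⁻¹' sets i) = ℙ {ω | X ω ∈ Bx i} := by
      intro i hi
      rw [hsets]
      simp only [if_pos (Finset.mem_Icc.1 hi).2]
      exact (hXident i).measure_mem_eq (hBx i)
    have hbu : ∀ k : Fin ℓ, ℙ (Xs (u k) ⁻¹' sets (u k)) = ℙ {ω | X ω ∈ Bu ((k : ℕ) + 1)} := by
      intro k
      rw [hsets]
      simp only [if_neg (by have := hgt k; omega : ¬ u k ≤ ℓ), hinv k]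
      exact (hXident (u k)).measure_mem_eq (hBu _)
    rw [Finset.prod_congr rfl hbx, Finset.prod_congr rfl (fun k _ => hbu k),
      hprodIcc (fun i => ℙ {ω | X ω ∈ Bu i}), hP, mul_comm]
  -- decomposition of the event over values of the `U`s
  have hdecomp : ∀ M, 1 ≤ M → ℙ (A M) = ∑ u ∈ S M, ℙ (E u) * ℙ (C M u) := by
    intro M hM
    set R : Set Ω := ⋂ k : Fin ℓ, {ω | U M ((k : ℕ) + 1) ω ∈ Finset.Icc 1 M} with hR
    have hRc : ℙ Rᶜ = 0 := by
      have hae : ∀ᵐ ω ∂ℙ, ω ∈ R := by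
        rw [hR]
        simp only [Set.mem_iInter, Set.mem_setOf_eq]
        rw [MeasureTheory.ae_all_iff]
        exact fun k => hUrange M hM _
      have h0 := MeasureTheory.ae_iff.1 hae
      exact h0
    have hAR : ℙ (A M) = ℙ (A M ∩ R) := by
      refine le_antisymm ?_ (measure_mono Set.inter_subset_left)
      calc ℙ (A M) ≤ ℙ ((A M ∩ R) ∪ Rᶜ) := by
            refine measure_mono fun ω hω => ?_
            by_cases h : ω ∈ R
            · exact Or.inl ⟨hω, h⟩
            · exact Or.inr h
        _ ≤ ℙ (A M ∩ R) + ℙ Rᶜ := measure_union_le _ _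
        _ = ℙ (A M ∩ R) := by rw [hRc, add_zero]
    have hsplit : A M ∩ R = ⋃ u ∈ S M, (E u ∩ C M u) := by
      ext ω
      simp only [Set.mem_iUnion, exists_prop]
      constructor
      · rintro ⟨hωA, hωR⟩
        have hωR' : ∀ k : Fin ℓ, U M ((k : ℕ) + 1) ω ∈ Finset.Icc 1 M := by
          intro k
          have := Set.mem_iInter.1 hωR k
          exact this
        obtain ⟨h1, h2⟩ := hωA
        refine ⟨fun k => U M ((k : ℕ) + 1) ω, Fintype.mem_piFinset.2 hωR', ?_, ?_⟩
        · rw [hmemE]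
          exact ⟨fun k => h1 _ ((hIcc _).2 ⟨k, rfl⟩), h2⟩
        · rw [hmemC]
          exact fun k => rfl
      · rintro ⟨u, huS, hωE, hωC⟩
        rw [hmemE] at hωE
        rw [hmemC] at hωC
        refine ⟨⟨?_, hωE.2⟩, ?_⟩
        · intro i hi
          obtain ⟨k, rfl⟩ := (hIcc i).1 hi
          rw [show U M ((k : ℕ) + 1) ω = u k from hωC k]
          exact hωE.1 k
        · rw [hR]
          refine Set.mem_iInter.2 fun k => ?_
          show U M ((k : ℕ) + 1) ω ∈ Finset.Icc 1 M
          rw [hωC k]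
          exact Fintype.mem_piFinset.1 huS k
    rw [hAR, hsplit, measure_biUnion_finset
      (fun u _ v _ huv => (hCdisj M u v huv).mono Set.inter_subset_right Set.inter_subset_right)
      (fun u _ => (hEmeas u).inter (hCmeas M u))]
    exact Finset.sum_congr rfl fun u _ => hECindep M u
  -- the sum over good `u`
  have hGterm : ∀ M, 1 ≤ M → ∑ u ∈ G M, ℙ (E u) * ℙ (C M u) = P * c M := by
    intro M hM
    have hterm : ∀ u ∈ G M, ℙ (E u) * ℙ (C M u) = P * ((M : ENNReal)⁻¹)^ℓ := by
      intro u hu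
      obtain ⟨huS, hinj, hgt⟩ := Finset.mem_filter.1 hu
      rw [hEgood u hinj hgt, hCprob M hM u huS]
    rw [Finset.sum_congr rfl hterm, Finset.sum_const, nsmul_eq_mul, hc]
    ring
  have hG' : ∀ M, (S M).filter (fun u => Function.Injective u ∧ ∀ k, ℓ < u k) = G M :=
    fun M => rfl
  -- bounds
  have hlow : ∀ M, 1 ≤ M → P * c M ≤ ℙ (A M) := by
    intro M hM
    rw [hdecomp M hM,
      ← Finset.sum_filter_add_sum_filter_not (S M)
        (fun u => Function.Injective u ∧ ∀ k, ℓ < u k) (fun u => ℙ (E u) * ℙ (C M u)),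
      hG' M, hGterm M hM]
    exact le_self_add
  have hScard : ∀ M, (S M).card = M ^ ℓ := by
    intro M
    rw [hS]
    simp [Fintype.card_piFinset, Nat.card_Icc]
  have hup : ∀ M, 1 ≤ M → ℙ (A M) ≤ P * c M + (1 - c M) := by
    intro M hM
    have hM0 : (M : ENNReal) ≠ 0 := Nat.cast_ne_zero.2 (by omega)
    have hmne : ((M : ENNReal)⁻¹)^ℓ ≠ ⊤ :=
      ENNReal.pow_ne_top (ENNReal.inv_ne_top.2 hM0)
    rw [hdecomp M hM,
      ← Finset.sum_filter_add_sum_filter_not (S M)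
        (fun u => Function.Injective u ∧ ∀ k, ℓ < u k) (fun u => ℙ (E u) * ℙ (C M u)),
      hG' M, hGterm M hM]
    refine add_le_add (le_refl _) ?_
    calc ∑ u ∈ (S M).filter (fun u => ¬(Function.Injective u ∧ ∀ k, ℓ < u k)),
          ℙ (E u) * ℙ (C M u)
        ≤ ∑ u ∈ (S M).filter (fun u => ¬(Function.Injective u ∧ ∀ k, ℓ < u k)),
          ((M : ENNReal)⁻¹)^ℓ := by
          refine Finset.sum_le_sum fun u hu => ?_
          rw [hCprob M hM u (Finset.mem_of_mem_filter u hu)]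
          exact mul_le_of_le_one_left zero_le prob_le_one
      _ = (((S M).card - (G M).card : ℕ) : ENNReal) * ((M : ENNReal)⁻¹)^ℓ := by
          have h2 : (G M).card +
              ((S M).filter (fun u => ¬(Function.Injective u ∧ ∀ k, ℓ < u k))).card
              = (S M).card := by
            rw [← hG' M]
            exact Finset.card_filter_add_card_filter_not _
          have h3 : ((S M).filter (fun u => ¬(Function.Injective u ∧ ∀ k, ℓ < u k))).card
              = (S M).card - (G M).card := Nat.eq_sub_of_add_eq' h2
          rw [Finset.sum_const, nsmul_eq_mul, h3]
      _ = 1 - c M := by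
          rw [ENNReal.natCast_sub, ENNReal.sub_mul (fun _ _ => hmne), hScard M,
            Nat.cast_pow, ← mul_pow,
            ENNReal.mul_inv_cancel hM0 (ENNReal.natCast_ne_top M), one_pow]
  -- limits
  have hcard : ∀ M, (G M).card = (M - ℓ).descFactorial ℓ := fun M => aux_card_resample ℓ M
  have hclim : Filter.Tendsto c Filter.atTop (nhds 1) := by
    refine (aux_ratio_resample ℓ).congr fun M => ?_
    rw [← hcard M]
  have hPc : Filter.Tendsto (fun M => P * c M) Filter.atTop (nhds P) := by
    have := ENNReal.Tendsto.const_mul (a := P) hclim (Or.inl one_ne_zero)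
    simpa using this
  have hsub : Filter.Tendsto (fun M => 1 - c M) Filter.atTop (nhds 0) := by
    have hcont : Continuous (fun x : ENNReal => 1 - x) :=
      ENNReal.continuous_sub_left ENNReal.one_ne_top
    have := (hcont.tendsto 1).comp hclim
    simpa [Function.comp_def] using this
  have hhi : Filter.Tendsto (fun M => P * c M + (1 - c M)) Filter.atTop (nhds P) := by
    have := hPc.add hsub
    simpa using this
  refine tendsto_of_tendsto_of_tendsto_of_le_of_le' hPc hhi ?_ ?_
  · filter_upwards [Filter.eventually_ge_atTop 1] with M hM
    exact hlow M hM
  · filter_upwards [Filter.eventually_ge_atTop 1] with M hM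
    exact hup M hM
end

section
/- Fix ℓ ≥ 1, M > ℓ, and Borel sets B_1, …, B_{2ℓ} ⊆ ℝ. Let A = {X_{U_1} ∈ B_1, …, X_{U_ℓ} ∈ B_ℓ, X_1 ∈ B_{ℓ+1}, …, X_ℓ ∈ B_{2ℓ}}, C = ∩_{i=1}^{ℓ} {U_i > ℓ}, and D = ∩_{1≤i<j≤ℓ} {U_i ≠ U_j}. Then P(A ∩ C ∩ D) = P(C ∩ D) · Π_{i=1}^{2ℓ} P(X ∈ B_i). -/
open MeasureTheory ProbabilityTheory

/-- Fix `ℓ ≥ 1`, `M > ℓ`, and Borel sets `B_1, …, B_ℓ, B'_1, …, B'_ℓ ⊆ ℝ`. With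
`A = {X_{U_1} ∈ B_1, …, X_{U_ℓ} ∈ B_ℓ, X_1 ∈ B'_1, …, X_ℓ ∈ B'_ℓ}`,
`C = ∩_{i=1}^ℓ {U_i > ℓ}` and `D = ∩_{1≤i<j≤ℓ} {U_i ≠ U_j}`, one has
`P(A ∩ C ∩ D) = P(C ∩ D) · ∏ᵢ P(X ∈ Bᵢ) ∏ᵢ P(X ∈ B'ᵢ)`. -/
theorem prob_inter_eq_prob_mul_prod
    {Ω : Type*} [MeasureSpace Ω] [IsProbabilityMeasure (ℙ : Measure Ω)]
    (X : Ω → ℝ) (hXmeas : Measurable X)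
    (Xs : ℕ → Ω → ℝ) (hXsmeas : ∀ i, Measurable (Xs i))
    -- the `X_i` are i.i.d. copies of `X`
    (hXiid : iIndepFun Xs ℙ)
    (hXident : ∀ i, IdentDistrib (Xs i) X ℙ ℙ)
    (U : ℕ → ℕ → Ω → ℕ) (hUmeas : ∀ M i, Measurable (U M i))
    -- for each `M ≥ 1`, the `U M i` are uniformly distributed on `{1, …, M}`
    (hUunif : ∀ M : ℕ, 1 ≤ M → ∀ i, ∀ j ∈ Finset.Icc 1 M,
      ℙ {ω | U M i ω = j} = (M : ENNReal)⁻¹)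
    (hUrange : ∀ M : ℕ, 1 ≤ M → ∀ i, ∀ᵐ ω ∂ℙ, U M i ω ∈ Finset.Icc 1 M)
    -- for each `M`, the `U M i` are independent among themselves …
    (hUiid : ∀ M, iIndepFun (U M) ℙ)
    -- … and the whole family `(U M i)_i` is independent of the whole family `(X_i)_i`
    (hUX : ∀ M, IndepFun (fun ω (i : ℕ) => U M i ω) (fun ω (i : ℕ) => Xs i ω) ℙ)
    (ℓ : ℕ) (hℓ : 1 ≤ ℓ) (M : ℕ) (hM : ℓ < M)
    (Bu Bx : ℕ → Set ℝ)
    (hBu : ∀ i, MeasurableSet (Bu i)) (hBx : ∀ i, MeasurableSet (Bx i)) :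
    ℙ ({ω | (∀ i ∈ Finset.Icc 1 ℓ, Xs (U M i ω) ω ∈ Bu i)
          ∧ (∀ i ∈ Finset.Icc 1 ℓ, Xs i ω ∈ Bx i)}
        ∩ {ω | ∀ i ∈ Finset.Icc 1 ℓ, ℓ < U M i ω}
        ∩ {ω | ∀ i ∈ Finset.Icc 1 ℓ, ∀ j ∈ Finset.Icc 1 ℓ, i ≠ j → U M i ω ≠ U M j ω})
      = ℙ ({ω | ∀ i ∈ Finset.Icc 1 ℓ, ℓ < U M i ω}
          ∩ {ω | ∀ i ∈ Finset.Icc 1 ℓ, ∀ j ∈ Finset.Icc 1 ℓ, i ≠ j → U M i ω ≠ U M j ω}) *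
        ((∏ i ∈ Finset.Icc 1 ℓ, ℙ {ω | X ω ∈ Bu i}) *
         (∏ i ∈ Finset.Icc 1 ℓ, ℙ {ω | X ω ∈ Bx i})) := by
  classical
  have hM1 : 1 ≤ M := hℓ.trans hM.le
  set S : Finset ℕ := Finset.Icc 1 ℓ with hSdef
  -- the events `E p = {U M i = p i for all i ∈ S}`
  set E : (({x // x ∈ S}) → ℕ) → Set Ω :=
    fun p => ⋂ i : {x // x ∈ S}, U M (i : ℕ) ⁻¹' {p i} with hEdef
  have hEmem : ∀ p ω, ω ∈ E p ↔ ∀ i : {x // x ∈ S}, U M (i : ℕ) ω = p i := by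
    intro p ω
    simp [hEdef]
  have hEmeas : ∀ p, MeasurableSet (E p) := fun p =>
    MeasurableSet.iInter fun i => hUmeas M i (measurableSet_singleton (p i))
  -- the good tuples
  set good : Finset (({x // x ∈ S}) → ℕ) :=
    (Fintype.piFinset fun _ => Finset.Icc 1 M).filter
      (fun p => Function.Injective p ∧ ∀ i, ℓ < p i) with hgooddef
  have hgood : ∀ p, p ∈ good ↔
      ((∀ i, p i ∈ Finset.Icc 1 M) ∧ Function.Injective p ∧ ∀ i, ℓ < p i) := by
    intro p
    simp [hgooddef, Fintype.mem_piFinset]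
  -- key decomposition lemma
  have key : ∀ W : Set Ω, MeasurableSet W →
      ℙ (W ∩ {ω | ∀ i ∈ Finset.Icc 1 ℓ, ℓ < U M i ω}
          ∩ {ω | ∀ i ∈ Finset.Icc 1 ℓ, ∀ j ∈ Finset.Icc 1 ℓ, i ≠ j → U M i ω ≠ U M j ω})
        = ∑ p ∈ good, ℙ (W ∩ E p) := by
    intro W hW
    have hae : ∀ᵐ ω ∂ℙ, ∀ i ∈ S, U M i ω ∈ Finset.Icc 1 M :=
      (ae_all_iff.2 fun i => hUrange M hM1 i).mono fun ω h i _ => h i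
    have haeS : ℙ ({ω | ∀ i ∈ S, U M i ω ∈ Finset.Icc 1 M}ᶜ) = 0 := by
      rw [Set.compl_setOf]
      exact ae_iff.1 hae
    have h0 : ℙ (W ∩ {ω | ∀ i ∈ Finset.Icc 1 ℓ, ℓ < U M i ω}
          ∩ {ω | ∀ i ∈ Finset.Icc 1 ℓ, ∀ j ∈ Finset.Icc 1 ℓ, i ≠ j → U M i ω ≠ U M j ω})
        = ℙ ((W ∩ {ω | ∀ i ∈ Finset.Icc 1 ℓ, ℓ < U M i ω}
          ∩ {ω | ∀ i ∈ Finset.Icc 1 ℓ, ∀ j ∈ Finset.Icc 1 ℓ, i ≠ j → U M i ω ≠ U M j ω})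
          ∩ {ω | ∀ i ∈ S, U M i ω ∈ Finset.Icc 1 M}) :=
      (measure_inter_conull haeS).symm
    have hset : (W ∩ {ω | ∀ i ∈ Finset.Icc 1 ℓ, ℓ < U M i ω}
          ∩ {ω | ∀ i ∈ Finset.Icc 1 ℓ, ∀ j ∈ Finset.Icc 1 ℓ, i ≠ j → U M i ω ≠ U M j ω})
          ∩ {ω | ∀ i ∈ S, U M i ω ∈ Finset.Icc 1 M}
        = ⋃ p ∈ good, W ∩ E p := by
      ext ω
      simp only [Set.mem_inter_iff, Set.mem_setOf_eq, Set.mem_iUnion, exists_prop]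
      constructor
      · rintro ⟨⟨⟨hWω, hC⟩, hD⟩, hT⟩
        refine ⟨fun i => U M (i : ℕ) ω, ?_, hWω, ?_⟩
        · rw [hgood]
          refine ⟨fun i => hT i i.2, ?_, fun i => hC i i.2⟩
          intro i j hij
          by_contra hne
          exact hD i i.2 j j.2 (fun h => hne (Subtype.ext h)) hij
        · rw [hEmem]
          exact fun i => rfl
      · rintro ⟨p, hp, hWω, hE⟩
        rw [hgood] at hp
        rw [hEmem] at hE
        obtain ⟨hrange, hinj, hgt⟩ := hp
        refine ⟨⟨⟨hWω, ?_⟩, ?_⟩, ?_⟩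
        · intro i hi
          rw [hE ⟨i, hi⟩]
          exact hgt _
        · intro i hi j hj hij
          rw [hE ⟨i, hi⟩, hE ⟨j, hj⟩]
          intro h
          exact hij (congrArg Subtype.val (hinj h))
        · intro i hi
          rw [hE ⟨i, hi⟩]
          exact hrange _
    rw [h0, hset, measure_biUnion_finset ?_ fun p _ => hW.inter (hEmeas p)]
    intro p _ q _ hpq
    refine Set.disjoint_left.2 fun ω hωp hωq => hpq ?_
    funext i
    rw [← (hEmem p ω).1 hωp.2 i, ← (hEmem q ω).1 hωq.2 i]
  -- measurability of the event A
  have hAmeas : MeasurableSet {ω | (∀ i ∈ Finset.Icc 1 ℓ, Xs (U M i ω) ω ∈ Bu i)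
          ∧ (∀ i ∈ Finset.Icc 1 ℓ, Xs i ω ∈ Bx i)} := by
    have h1 : ∀ i : ℕ, MeasurableSet {ω | Xs (U M i ω) ω ∈ Bu i} := by
      intro i
      have : {ω | Xs (U M i ω) ω ∈ Bu i}
          = ⋃ n : ℕ, (U M i ⁻¹' {n}) ∩ (Xs n ⁻¹' Bu i) := by
        ext ω
        simp only [Set.mem_setOf_eq, Set.mem_iUnion, Set.mem_inter_iff, Set.mem_preimage,
          Set.mem_singleton_iff]
        constructor
        · exact fun h => ⟨U M i ω, rfl, h⟩
        · rintro ⟨n, hn, h⟩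
          rw [hn]
          exact h
      rw [this]
      exact MeasurableSet.iUnion fun n =>
        (hUmeas M i (measurableSet_singleton n)).inter (hXsmeas n (hBu i))
    have h2 : {ω | (∀ i ∈ Finset.Icc 1 ℓ, Xs (U M i ω) ω ∈ Bu i)
          ∧ (∀ i ∈ Finset.Icc 1 ℓ, Xs i ω ∈ Bx i)}
        = (⋂ i ∈ Finset.Icc 1 ℓ, {ω | Xs (U M i ω) ω ∈ Bu i})
          ∩ ⋂ i ∈ Finset.Icc 1 ℓ, Xs i ⁻¹' Bx i := by
      ext ω
      simp [Set.mem_iInter]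
    rw [h2]
    exact ((Finset.Icc 1 ℓ).measurableSet_biInter fun i _ => h1 i).inter
      ((Finset.Icc 1 ℓ).measurableSet_biInter fun i _ => hXsmeas i (hBx i))
  -- main per-tuple computation
  have hXev : ∀ p ∈ good,
      ℙ ({ω | (∀ i ∈ Finset.Icc 1 ℓ, Xs (U M i ω) ω ∈ Bu i)
          ∧ (∀ i ∈ Finset.Icc 1 ℓ, Xs i ω ∈ Bx i)} ∩ E p)
        = ℙ (E p) * ((∏ i ∈ Finset.Icc 1 ℓ, ℙ {ω | X ω ∈ Bu i}) *
            (∏ i ∈ Finset.Icc 1 ℓ, ℙ {ω | X ω ∈ Bx i})) := by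
    intro p hp
    rw [hgood] at hp
    obtain ⟨hrange, hinj, hgt⟩ := hp
    set F : Set Ω := {ω | (∀ i : {x // x ∈ S}, Xs (p i) ω ∈ Bu (i : ℕ))
        ∧ ∀ i ∈ S, Xs i ω ∈ Bx i} with hFdef
    have hswap : {ω | (∀ i ∈ Finset.Icc 1 ℓ, Xs (U M i ω) ω ∈ Bu i)
          ∧ (∀ i ∈ Finset.Icc 1 ℓ, Xs i ω ∈ Bx i)} ∩ E p = E p ∩ F := by
      ext ω
      simp only [Set.mem_inter_iff, Set.mem_setOf_eq, hFdef, hEmem]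
      constructor
      · rintro ⟨⟨hA1, hA2⟩, hE⟩
        refine ⟨hE, fun i => ?_, hA2⟩
        have := hA1 i.1 i.2
        rwa [hE i] at this
      · rintro ⟨hE, h1, h2⟩
        refine ⟨⟨fun i hi => ?_, h2⟩, hE⟩
        have := h1 ⟨i, hi⟩
        rw [← hE ⟨i, hi⟩] at this
        exact this
    -- independence step
    have hEpre : E p = (fun ω (i : ℕ) => U M i ω) ⁻¹'
        (⋂ i : {x // x ∈ S}, (fun g : ℕ → ℕ => g (i : ℕ)) ⁻¹' {p i}) := by
      ext ω
      simp [hEdef]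
    have hFpre : F = (fun ω (i : ℕ) => Xs i ω) ⁻¹'
        ((⋂ i : {x // x ∈ S}, (fun f : ℕ → ℝ => f (p i)) ⁻¹' Bu (i : ℕ))
          ∩ ⋂ i ∈ S, (fun f : ℕ → ℝ => f i) ⁻¹' Bx i) := by
      ext ω
      simp [hFdef]
    have hsu : MeasurableSet (⋂ i : {x // x ∈ S},
        (fun g : ℕ → ℕ => g (i : ℕ)) ⁻¹' {p i}) :=
      MeasurableSet.iInter fun i =>
        (measurable_pi_apply (i : ℕ)) (measurableSet_singleton (p i))
    have hsx : MeasurableSet ((⋂ i : {x // x ∈ S}, (fun f : ℕ → ℝ => f (p i)) ⁻¹' Bu (i : ℕ))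
          ∩ ⋂ i ∈ S, (fun f : ℕ → ℝ => f i) ⁻¹' Bx i) :=
      (MeasurableSet.iInter fun i => (measurable_pi_apply (p i)) (hBu (i : ℕ))).inter
        (S.measurableSet_biInter fun i _ => (measurable_pi_apply i) (hBx i))
    have hindep : ℙ (E p ∩ F) = ℙ (E p) * ℙ F := by
      rw [hEpre, hFpre]
      exact (hUX M).measure_inter_preimage_eq_mul _ _ hsu hsx
    -- computing ℙ F
    set T : Finset ℕ := S ∪ Finset.image (fun i : {x // x ∈ S} => p i) Finset.univ with hTdef
    set q : ℕ → Set ℝ := fun k =>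
      (if k ∈ S then Bx k else Set.univ) ∩
        ⋂ i : {x // x ∈ S}, ⋂ _ : p i = k, Bu (i : ℕ) with hqdef
    have hq : ∀ k, MeasurableSet (q k) := by
      intro k
      refine MeasurableSet.inter ?_
        (MeasurableSet.iInter fun i => MeasurableSet.iInter fun _ => hBu (i : ℕ))
      split
      · exact hBx k
      · exact MeasurableSet.univ
    have hpnotS : ∀ i : {x // x ∈ S}, (p i) ∉ S := by
      intro i hmem
      rw [hSdef, Finset.mem_Icc] at hmem
      exact absurd (hgt i) (by omega)
    have hFq : F = ⋂ k ∈ T, Xs k ⁻¹' q k := by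
      ext ω
      simp only [hFdef, Set.mem_setOf_eq, Set.mem_iInter, Set.mem_preimage, hqdef,
        Set.mem_inter_iff, hTdef, Finset.mem_union, Finset.mem_image, Finset.mem_univ,
        true_and]
      constructor
      · rintro ⟨h1, h2⟩ k hk
        refine ⟨?_, fun i hik => ?_⟩
        · by_cases hkS : k ∈ S
          · rw [if_pos hkS]
            exact h2 k hkS
          · rw [if_neg hkS]
            exact Set.mem_univ _
        · rw [← hik]
          exact h1 i
      · intro h
        constructor
        · intro i
          have hmem : p i ∈ T := by
            rw [hTdef]
            exact Finset.mem_union_right _ (Finset.mem_image.2 ⟨i, Finset.mem_univ i, rfl⟩)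
          have := h (p i) (by simpa [hTdef] using hmem)
          exact this.2 i rfl
        · intro k hkS
          have hmem : k ∈ T := by
            rw [hTdef]
            exact Finset.mem_union_left _ hkS
          have := (h k (by simpa [hTdef] using hmem)).1
          rwa [if_pos hkS] at this
    have hdisjT : Disjoint S (Finset.image (fun i : {x // x ∈ S} => p i) Finset.univ) := by
      refine Finset.disjoint_left.2 fun k hkS hkI => ?_
      obtain ⟨i, _, hik⟩ := Finset.mem_image.1 hkI
      exact hpnotS i (hik ▸ hkS)
    have hqS : ∀ k ∈ S, q k = Bx k := by
      intro k hkS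
      have h1 : ∀ i : {x // x ∈ S}, p i ≠ k := fun i hik => hpnotS i (hik ▸ hkS)
      rw [hqdef]
      simp only [if_pos hkS]
      rw [Set.inter_eq_left]
      intro x _
      simp only [Set.mem_iInter]
      intro i hik
      exact absurd hik (h1 i)
    have hqP : ∀ i : {x // x ∈ S}, q (p i) = Bu (i : ℕ) := by
      intro i
      rw [hqdef]
      simp only [if_neg (hpnotS i)]
      rw [Set.univ_inter]
      ext x
      simp only [Set.mem_iInter]
      constructor
      · exact fun h => h i rfl
      · intro hx j hj
        rw [hinj hj]
        exact hx
    have hPF : ℙ F = (∏ i ∈ Finset.Icc 1 ℓ, ℙ {ω | X ω ∈ Bu i}) *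
        (∏ i ∈ Finset.Icc 1 ℓ, ℙ {ω | X ω ∈ Bx i}) := by
      rw [hFq, hXiid.measure_inter_preimage_eq_mul T (fun k _ => hq k),
        hTdef, Finset.prod_union hdisjT,
        Finset.prod_image (fun i _ j _ h => hinj h)]
      have e1 : ∀ k ∈ S, ℙ (Xs k ⁻¹' q k) = ℙ {ω | X ω ∈ Bx k} := by
        intro k hkS
        rw [hqS k hkS]
        exact (hXident k).measure_mem_eq (hBx k)
      have e2 : ∀ i : {x // x ∈ S}, ℙ (Xs (p i) ⁻¹' q (p i)) = ℙ {ω | X ω ∈ Bu (i : ℕ)} := by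
        intro i
        rw [hqP i]
        exact (hXident (p i)).measure_mem_eq (hBu (i : ℕ))
      rw [Finset.prod_congr rfl e1, Finset.prod_congr rfl fun i _ => e2 i]
      rw [Finset.prod_coe_sort S (fun k => ℙ {ω | X ω ∈ Bu k})]
      rw [mul_comm]
    rw [hswap, hindep, hPF]
  -- assemble
  have hCD : ℙ ({ω | ∀ i ∈ Finset.Icc 1 ℓ, ℓ < U M i ω}
          ∩ {ω | ∀ i ∈ Finset.Icc 1 ℓ, ∀ j ∈ Finset.Icc 1 ℓ, i ≠ j → U M i ω ≠ U M j ω})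
      = ∑ p ∈ good, ℙ (E p) := by
    have := key Set.univ MeasurableSet.univ
    simpa [Set.univ_inter] using this
  rw [key _ hAmeas, hCD, Finset.sum_mul]
  exact Finset.sum_congr rfl hXev
end
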